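/- arXiv:2105.05963 — 6 statements merged into one kernel-verified Lean document; each statement's English description precedes it below -/
import Mathlib

section
/- For α > 0 and probability densities f, g on ℝ (with respect to μ) with finite integrals ∫f^{α+1}, ∫g^{α+1}, the quantity log ∫ f^{α+1} − ((1+α)/α) log ∫ f^α g + (1/α) log ∫ g^{α+1} is nonnegative, and equals zero if and only if f = g almost everywhere. -/
open MeasureTheory Real

lemma young_eq {p q : ℝ} (hp : 1 < p) (hq : 1 < q) (hpq : 1/p + 1/q = 1)
    {a b : ℝ} (ha : 0 ≤ a) (hb : 0 ≤ b) :
    a * b ≤ a ^ p / p + b ^ q / q ∧ (a * b = a ^ p / p + b ^ q / q ↔ a ^ p = b ^ q) := by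
  have hp0 : (0:ℝ) < p := one_pos.trans hp
  have hq0 : (0:ℝ) < q := one_pos.trans hq
  rcases ha.eq_or_lt with h0 | hapos
  · have h0' : a = 0 := h0.symm
    subst h0'
    rw [Real.zero_rpow hp0.ne']
    constructor
    · simpa using by positivity
    · constructor
      · intro h
        have : b ^ q = 0 := by
          field_simp at h
          simpa [hp0.ne'] using h.symm
        simp [this]
      · intro h
        simp [← h]
  rcases hb.eq_or_lt with h0 | hbpos
  · have h0' : b = 0 := h0.symm
    subst h0'
    rw [Real.zero_rpow hq0.ne']
    constructor
    · simpa using by positivity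
    · constructor
      · intro h
        have : a ^ p = 0 := by
          field_simp at h
          simpa [hq0.ne'] using h.symm
        simp [this]
      · intro h
        simp [h]
  · set x := p * Real.log a with hx
    set y := q * Real.log b with hy
    have hax : a ^ p = Real.exp x := by rw [Real.rpow_def_of_pos hapos, mul_comm]
    have hby : b ^ q = Real.exp y := by rw [Real.rpow_def_of_pos hbpos, mul_comm]
    have hab : a * b = Real.exp ((1/p) * x + (1/q) * y) := by
      have h1 : (1/p) * x = Real.log a := by field_simp [hx]; exact hx
      have h2 : (1/q) * y = Real.log b := by field_simp [hy]; exact hy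
      rw [h1, h2, Real.exp_add, Real.exp_log hapos, Real.exp_log hbpos]
    have hineq := convexOn_exp.2 (Set.mem_univ x) (Set.mem_univ y)
      (by positivity : (0:ℝ) ≤ 1/p) (by positivity : (0:ℝ) ≤ 1/q) hpq
    simp only [smul_eq_mul] at hineq
    have key : a * b ≤ a ^ p / p + b ^ q / q := by
      rw [hab, hax, hby, div_eq_mul_inv (exp x), div_eq_mul_inv (exp y)]
      calc Real.exp ((1/p) * x + (1/q) * y) ≤ (1/p) * exp x + (1/q) * exp y := hineq
        _ = exp x * p⁻¹ + exp y * q⁻¹ := by ring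
    refine ⟨key, ?_, ?_⟩
    · intro h
      by_contra hxy
      have hne : x ≠ y := fun hxyeq => hxy (by rw [hax, hby, hxyeq])
      have := strictConvexOn_exp.2 (Set.mem_univ x) (Set.mem_univ y) hne
        (by positivity : (0:ℝ) < 1/p) (by positivity : (0:ℝ) < 1/q) hpq
      simp only [smul_eq_mul] at this
      rw [hab, hax, hby] at h
      rw [h] at this
      simp only [one_div, div_eq_inv_mul] at this
      linarith
    · intro h
      have hxyeq : x = y := by
        have : Real.exp x = Real.exp y := by rw [← hax, ← hby, h]
        exact Real.exp_injective this
      rw [hab, hax, hby, hxyeq]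
      have : (1/p) * y + (1/q) * y = y := by
        have : (1/p + 1/q) * y = y := by rw [hpq, one_mul]
        linarith [this]
      rw [this]
      have hpq' : q + p = p * q := by field_simp at hpq; linarith
      field_simp
      rw [← hpq']

/-- The logarithmic density power divergence is nonnegative, and zero iff `f = g` a.e. -/
theorem ldpd_nonneg_iff
    {μ : Measure ℝ} {f g : ℝ → ℝ} {α : ℝ} (hα : 0 < α)
    (hf : Measurable f) (hg : Measurable g)
    (hf0 : ∀ x, 0 ≤ f x) (hg0 : ∀ x, 0 ≤ g x)
    (hfint : ∫ x, f x ∂μ = 1) (hgint : ∫ x, g x ∂μ = 1)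
    (hfg : Integrable (fun x => f x ^ α * g x) μ)
    (hf1 : Integrable (fun x => f x ^ (α + 1)) μ)
    (hg1 : Integrable (fun x => g x ^ (α + 1)) μ)
    (hfgpos : 0 < ∫ x, f x ^ α * g x ∂μ)
    (hf1pos : 0 < ∫ x, f x ^ (α + 1) ∂μ)
    (hg1pos : 0 < ∫ x, g x ^ (α + 1) ∂μ) :
    0 ≤ Real.log (∫ x, f x ^ (α + 1) ∂μ)
        - ((1 + α) / α) * Real.log (∫ x, f x ^ α * g x ∂μ)
        + (1 / α) * Real.log (∫ x, g x ^ (α + 1) ∂μ) ∧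
    (Real.log (∫ x, f x ^ (α + 1) ∂μ)
        - ((1 + α) / α) * Real.log (∫ x, f x ^ α * g x ∂μ)
        + (1 / α) * Real.log (∫ x, g x ^ (α + 1) ∂μ) = 0 ↔ f =ᵐ[μ] g) := by
  have hα1 : (0:ℝ) < α + 1 := by linarith
  set A := ∫ x, f x ^ (α + 1) ∂μ with hA
  set C := ∫ x, g x ^ (α + 1) ∂μ with hC
  set B := ∫ x, f x ^ α * g x ∂μ with hB
  have hp : 1 < (α + 1) / α := by rw [lt_div_iff₀ hα]; linarith
  have hq : 1 < α + 1 := by linarith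
  have hp0 : (0:ℝ) < (α + 1) / α := one_pos.trans hp
  have hq0 : (0:ℝ) < α + 1 := hα1
  have hpq : 1 / ((α + 1) / α) + 1 / (α + 1) = 1 := by field_simp
  set cA := A ^ (α / (α + 1)) with hcAdef
  set cC := C ^ (1 / (α + 1)) with hcCdef
  have hcA : 0 < cA := Real.rpow_pos_of_pos hf1pos _
  have hcC : 0 < cC := Real.rpow_pos_of_pos hg1pos _
  -- pointwise rewriting identities
  have hup : ∀ x, (f x ^ α / cA) ^ ((α + 1) / α) = f x ^ (α + 1) / A := by
    intro x
    rw [Real.div_rpow (Real.rpow_nonneg (hf0 x) α) hcA.le, hcAdef,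
      ← Real.rpow_mul (hf0 x), ← Real.rpow_mul hf1pos.le]
    congr 1
    · congr 1; field_simp
    · rw [show α / (α + 1) * ((α + 1) / α) = 1 by field_simp, Real.rpow_one]
  have hvq : ∀ x, (g x / cC) ^ (α + 1) = g x ^ (α + 1) / C := by
    intro x
    rw [Real.div_rpow (hg0 x) hcC.le, hcCdef, ← Real.rpow_mul hg1pos.le]
    congr 1
    rw [show 1 / (α + 1) * (α + 1) = 1 by field_simp, Real.rpow_one]
  have huv : ∀ x, (f x ^ α / cA) * (g x / cC) = f x ^ α * g x / (cA * cC) := by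
    intro x; field_simp
  -- the nonnegative integrand
  set φ : ℝ → ℝ := fun x =>
    f x ^ (α + 1) / A / ((α + 1) / α) + g x ^ (α + 1) / C / (α + 1)
      - f x ^ α * g x / (cA * cC) with hφdef
  have hφnonneg : ∀ x, 0 ≤ φ x := by
    intro x
    have h := (young_eq hp hq hpq (div_nonneg (Real.rpow_nonneg (hf0 x) α) hcA.le)
      (div_nonneg (hg0 x) hcC.le)).1
    rw [hup x, hvq x, huv x] at h
    simp only [hφdef]
    linarith
  have i1 : Integrable (fun x => f x ^ (α + 1) / A / ((α + 1) / α)) μ :=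
    (hf1.div_const A).div_const _
  have i2 : Integrable (fun x => g x ^ (α + 1) / C / (α + 1)) μ :=
    (hg1.div_const C).div_const _
  have i3 : Integrable (fun x => f x ^ α * g x / (cA * cC)) μ := hfg.div_const _
  have i12 : Integrable (fun x => f x ^ (α + 1) / A / ((α + 1) / α)
      + g x ^ (α + 1) / C / (α + 1)) μ := i1.add i2
  have hφint : Integrable φ μ := i12.sub i3
  have hφval : ∫ x, φ x ∂μ = 1 - B / (cA * cC) := by
    simp only [hφdef]
    rw [integral_sub i12 i3, integral_add i1 i2, integral_div, integral_div, integral_div,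
      integral_div, integral_div, ← hA, ← hC, ← hB, div_self hf1pos.ne', div_self hg1pos.ne']
    rw [show (1:ℝ) / ((α + 1) / α) + 1 / (α + 1) = 1 from hpq]
  have key1 : B ≤ cA * cC := by
    have h0 : 0 ≤ ∫ x, φ x ∂μ := integral_nonneg hφnonneg
    rw [hφval] at h0
    have : B / (cA * cC) ≤ 1 := by linarith
    exact (div_le_one (by positivity)).mp this
  -- equality in Hölder implies f = g a.e.
  have keyeq : B = cA * cC → f =ᵐ[μ] g := by
    intro hBe
    have hint0 : ∫ x, φ x ∂μ = 0 := by
      rw [hφval, hBe, div_self (by positivity)]; ring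
    have hae : φ =ᵐ[μ] 0 :=
      (integral_eq_zero_iff_of_nonneg hφnonneg hφint).mp hint0
    set c := (A / C) ^ (α + 1)⁻¹ with hcdef
    have hcpos : 0 < c := Real.rpow_pos_of_pos (by positivity) _
    have hae2 : ∀ᵐ x ∂μ, f x = c * g x := by
      filter_upwards [hae] with x hx
      simp only [Pi.zero_apply, hφdef] at hx
      have hyoung := young_eq hp hq hpq (div_nonneg (Real.rpow_nonneg (hf0 x) α) hcA.le)
        (div_nonneg (hg0 x) hcC.le)
      rw [hup x, hvq x, huv x] at hyoung
      have heq : f x ^ (α + 1) / A = g x ^ (α + 1) / C := hyoung.2.mp (by linarith)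
      have hfq : f x ^ (α + 1) = (A / C) * g x ^ (α + 1) := by
        field_simp at heq ⊢
        linarith [heq]
      calc f x = (f x ^ (α + 1)) ^ (α + 1)⁻¹ :=
            (Real.rpow_rpow_inv (hf0 x) hq0.ne').symm
        _ = ((A / C) * g x ^ (α + 1)) ^ (α + 1)⁻¹ := by rw [hfq]
        _ = (A / C) ^ (α + 1)⁻¹ * (g x ^ (α + 1)) ^ (α + 1)⁻¹ := by
            rw [Real.mul_rpow (by positivity) (Real.rpow_nonneg (hg0 x) _)]
        _ = c * g x := by rw [hcdef, Real.rpow_rpow_inv (hg0 x) hq0.ne']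
    have hc1 : c = 1 := by
      have h1 : ∫ x, f x ∂μ = ∫ x, c * g x ∂μ := integral_congr_ae hae2
      rw [hfint, integral_const_mul, hgint, mul_one] at h1
      exact h1.symm
    filter_upwards [hae2] with x hx
    rw [hx, hc1, one_mul]
  -- converse: f = g a.e. implies equality
  have hrev : f =ᵐ[μ] g → B = cA * cC := by
    intro hfe
    have hBC : B = C := by
      rw [hB, hC]
      apply integral_congr_ae
      filter_upwards [hfe] with x hx
      rw [hx]
      rcases (hg0 x).eq_or_lt with h0 | hpos
      · rw [← h0, Real.zero_rpow hα.ne', Real.zero_rpow hα1.ne', zero_mul]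
      · rw [Real.rpow_add_one hpos.ne']
    have hAC : A = C := by
      rw [hA, hC]
      apply integral_congr_ae
      filter_upwards [hfe] with x hx
      rw [hx]
    rw [hcAdef, hcCdef, hAC, hBC, ← Real.rpow_add hg1pos,
      ← add_div, div_self hα1.ne', Real.rpow_one]
  -- log arithmetic
  have hM : Real.log (cA * cC) = (α / (α + 1)) * Real.log A + (1 / (α + 1)) * Real.log C := by
    rw [Real.log_mul hcA.ne' hcC.ne', hcAdef, hcCdef,
      Real.log_rpow hf1pos, Real.log_rpow hg1pos]
  have hE : Real.log A - (1 + α) / α * Real.log B + 1 / α * Real.log C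
      = ((1 + α) / α) * (Real.log (cA * cC) - Real.log B) := by
    rw [hM]; field_simp; ring
  have hcoef : (0:ℝ) < (1 + α) / α := by positivity
  have hlogle : Real.log B ≤ Real.log (cA * cC) :=
    Real.log_le_log hfgpos key1
  constructor
  · rw [hE]
    exact mul_nonneg hcoef.le (by linarith)
  · rw [hE]
    constructor
    · intro h
      have h2 : Real.log (cA * cC) - Real.log B = 0 := by
        rcases mul_eq_zero.mp h with h' | h'
        · exact absurd h' hcoef.ne'
        · exact h'
      have hBe : B = cA * cC := by
        have hlogeq : Real.log B = Real.log (cA * cC) := by linarith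
        calc B = Real.exp (Real.log B) := (Real.exp_log hfgpos).symm
          _ = Real.exp (Real.log (cA * cC)) := by rw [hlogeq]
          _ = cA * cC := Real.exp_log (by positivity)
      exact keyeq hBe
    · intro hfe
      rw [hrev hfe, sub_self, mul_zero]
end

section
/- Let B : [0,∞) → ℝ be twice differentiable, strictly convex with B(0) = B'(0) = 0, and suppose there exist α₀, α₁, α₂ > 0 such that for all θ > 0, (θB'(θ) − B(θ))^{α₀} (B(θ))^{α₂} = C θ^{α₀+α₂−α₁} (θB'(θ))^{α₁}, where C = α₀^{α₀}α₂^{α₂}/α₁^{α₁}. Then α₁ = α₀ + α₂ and B(θ)/(θB'(θ)) = α₂/(α₀+α₂) for all θ > 0. -/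
open Real Set Filter


lemma amgm_lt {α₀ α₂ x : ℝ} (h₀ : 0 < α₀) (h₂ : 0 < α₂) (hx0 : 0 < x) (hx1 : x < 1)
    (hne : x ≠ α₂ / (α₀ + α₂)) :
    (1 - x) ^ α₀ * x ^ α₂ < α₀ ^ α₀ * α₂ ^ α₂ / (α₀ + α₂) ^ (α₀ + α₂) := by
  set s := α₀ + α₂ with hs
  have hspos : 0 < s := by positivity
  have h1x : 0 < 1 - x := by linarith
  set a := (1 - x) * s / α₀ with ha
  set b := x * s / α₂ with hb
  have hapos : 0 < a := by positivity
  have hbpos : 0 < b := by positivity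
  have hab : a ≠ b := by
    intro h
    apply hne
    rw [ha, hb, div_eq_div_iff h₀.ne' h₂.ne'] at h
    have hxs : x * s = α₂ := by nlinarith [hspos]
    field_simp
    linarith
  have hcomb : (α₀ / s) • a + (α₂ / s) • b = 1 := by
    rw [ha, hb, smul_eq_mul, smul_eq_mul]
    field_simp
    ring
  have hkey := strictConcaveOn_log_Ioi.2 (mem_Ioi.2 hapos) (mem_Ioi.2 hbpos) hab
      (by positivity : (0:ℝ) < α₀ / s) (by positivity : (0:ℝ) < α₂ / s)
      (by field_simp; exact hs.symm)
  rw [hcomb, Real.log_one] at hkey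
  -- hkey : (α₀/s) • log a + (α₂/s) • log b < 0
  have hkey2 : α₀ * Real.log a + α₂ * Real.log b < 0 := by
    have := mul_lt_mul_of_pos_left hkey hspos
    simp only [smul_eq_mul] at this ⊢
    rw [mul_zero] at this
    calc α₀ * Real.log a + α₂ * Real.log b
        = s * (α₀ / s * Real.log a + α₂ / s * Real.log b) := by field_simp
      _ < 0 := this
  have hloga : Real.log a = Real.log (1 - x) + Real.log s - Real.log α₀ := by
    rw [ha, Real.log_div (by positivity) h₀.ne', Real.log_mul h1x.ne' hspos.ne']
  have hlogb : Real.log b = Real.log x + Real.log s - Real.log α₂ := by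
    rw [hb, Real.log_div (by positivity) h₂.ne', Real.log_mul hx0.ne' hspos.ne']
  rw [hloga, hlogb] at hkey2
  have hfin : α₀ * Real.log (1 - x) + α₂ * Real.log x <
      α₀ * Real.log α₀ + α₂ * Real.log α₂ - s * Real.log s := by
    have : s * Real.log s = α₀ * Real.log s + α₂ * Real.log s := by rw [hs]; ring
    nlinarith [hkey2]
  have hL : (1 - x) ^ α₀ * x ^ α₂ = Real.exp (α₀ * Real.log (1 - x) + α₂ * Real.log x) := by
    rw [Real.exp_add, Real.rpow_def_of_pos h1x, Real.rpow_def_of_pos hx0]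
    ring_nf
  have hR : α₀ ^ α₀ * α₂ ^ α₂ / s ^ s =
      Real.exp (α₀ * Real.log α₀ + α₂ * Real.log α₂ - s * Real.log s) := by
    rw [Real.exp_sub, Real.exp_add, Real.rpow_def_of_pos h₀, Real.rpow_def_of_pos h₂,
      Real.rpow_def_of_pos hspos]
    ring_nf
  rw [hL, hR]
  exact Real.exp_lt_exp.2 hfin

lemma amgm_le {α₀ α₂ x : ℝ} (h₀ : 0 < α₀) (h₂ : 0 < α₂) (hx0 : 0 < x) (hx1 : x < 1) :
    (1 - x) ^ α₀ * x ^ α₂ ≤ α₀ ^ α₀ * α₂ ^ α₂ / (α₀ + α₂) ^ (α₀ + α₂) := by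
  by_cases h : x = α₂ / (α₀ + α₂)
  · subst h
    have hspos : 0 < α₀ + α₂ := by positivity
    have h1 : 1 - α₂ / (α₀ + α₂) = α₀ / (α₀ + α₂) := by field_simp; ring
    rw [h1, Real.div_rpow h₀.le hspos.le, Real.div_rpow h₂.le hspos.le,
      div_mul_div_comm, ← Real.rpow_add hspos]
  · exact (amgm_lt h₀ h₂ hx0 hx1 h).le

section helpers

variable {B B' : ℝ → ℝ}

lemma basic_facts
    (hconv : StrictConvexOn ℝ (Set.Ici 0) B)
    (hderiv : ∀ y ∈ Set.Ici (0 : ℝ), HasDerivWithinAt B (B' y) (Set.Ici 0) y)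
    (hB0 : B 0 = 0) (hB'0 : B' 0 = 0) {θ : ℝ} (hθ : 0 < θ) :
    0 < B θ ∧ B θ < θ * B' θ := by
  have h0S : (0:ℝ) ∈ Set.Ici (0:ℝ) := Set.self_mem_Ici
  have hθS : θ ∈ Set.Ici (0:ℝ) := hθ.le
  constructor
  · have h := hconv.lt_slope_of_hasDerivWithinAt h0S hθS hθ (hderiv 0 h0S)
    rw [slope_def_field, hB'0, hB0] at h
    rw [lt_div_iff₀ (by linarith)] at h
    linarith
  · have h := hconv.slope_lt_of_hasDerivWithinAt h0S hθS hθ (hderiv θ hθS)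
    rw [slope_def_field, hB0] at h
    rw [div_lt_iff₀ (by linarith)] at h
    linarith

lemma tangent_fact
    (hconv : StrictConvexOn ℝ (Set.Ici 0) B)
    (hderiv : ∀ y ∈ Set.Ici (0 : ℝ), HasDerivWithinAt B (B' y) (Set.Ici 0) y)
    {T θ : ℝ} (hT : 0 ≤ T) (hTθ : T < θ) :
    B T + (θ - T) * B' T ≤ B θ := by
  have h := hconv.lt_slope_of_hasDerivWithinAt hT (hT.trans hTθ.le : θ ∈ Set.Ici (0:ℝ)) hTθ
    (hderiv T hT)
  rw [slope_def_field, lt_div_iff₀ (by linarith)] at h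
  nlinarith

lemma deriv_mono
    (hconv : StrictConvexOn ℝ (Set.Ici 0) B)
    (hderiv : ∀ y ∈ Set.Ici (0 : ℝ), HasDerivWithinAt B (B' y) (Set.Ici 0) y)
    {x y : ℝ} (hx : 0 ≤ x) (hxy : x < y) : B' x < B' y := by
  have hyS : y ∈ Set.Ici (0:ℝ) := hx.trans hxy.le
  have h1 := hconv.lt_slope_of_hasDerivWithinAt hx hyS hxy (hderiv x hx)
  have h2 := hconv.slope_lt_of_hasDerivWithinAt hx hyS hxy (hderiv y hyS)
  linarith

end helpers


set_option maxHeartbeats 1000000 in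

/-- If the equality constraint
`(θB'(θ) − B(θ))^{α₀} (B(θ))^{α₂} = C θ^{α₀+α₂−α₁} (θB'(θ))^{α₁}` holds for all `θ > 0`
with `C = α₀^{α₀}α₂^{α₂}/α₁^{α₁}`, then `α₁ = α₀ + α₂` and
`B(θ)/(θB'(θ)) = α₂/(α₀+α₂)` for all `θ > 0`. -/
theorem lbf_constraint_forces_ratio
    (B B' B'' : ℝ → ℝ)
    (hconv : StrictConvexOn ℝ (Set.Ici 0) B)
    (hderiv : ∀ y ∈ Set.Ici (0 : ℝ), HasDerivWithinAt B (B' y) (Set.Ici 0) y)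
    (hderiv2 : ∀ y ∈ Set.Ici (0 : ℝ), HasDerivWithinAt B' (B'' y) (Set.Ici 0) y)
    (hB0 : B 0 = 0) (hB'0 : B' 0 = 0)
    (α₀ α₁ α₂ : ℝ) (h₀ : 0 < α₀) (h₁ : 0 < α₁) (h₂ : 0 < α₂)
    (heq : ∀ θ > (0 : ℝ),
      (θ * B' θ - B θ) ^ α₀ * (B θ) ^ α₂ =
        (α₀ ^ α₀ * α₂ ^ α₂ / α₁ ^ α₁) * θ ^ (α₀ + α₂ - α₁) * (θ * B' θ) ^ α₁) :
    α₁ = α₀ + α₂ ∧ ∀ θ > (0 : ℝ), B θ / (θ * B' θ) = α₂ / (α₀ + α₂) := by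
  have hBpos : ∀ θ : ℝ, 0 < θ → 0 < B θ :=
    fun θ hθ => (basic_facts hconv hderiv hB0 hB'0 hθ).1
  have hBlt : ∀ θ : ℝ, 0 < θ → B θ < θ * B' θ :=
    fun θ hθ => (basic_facts hconv hderiv hB0 hB'0 hθ).2
  have hB'pos : ∀ θ : ℝ, 0 < θ → 0 < B' θ := by
    intro θ hθ
    have h1 := hBpos θ hθ; have h2 := hBlt θ hθ
    nlinarith
  set C : ℝ := α₀ ^ α₀ * α₂ ^ α₂ / α₁ ^ α₁ with hC_def
  set C₀ : ℝ := α₀ ^ α₀ * α₂ ^ α₂ / (α₀ + α₂) ^ (α₀ + α₂) with hC₀_def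
  have hCpos : 0 < C := by
    rw [hC_def]
    exact div_pos (mul_pos (rpow_pos_of_pos h₀ _) (rpow_pos_of_pos h₂ _)) (rpow_pos_of_pos h₁ _)
  have hC₀pos : 0 < C₀ := by
    rw [hC₀_def]
    exact div_pos (mul_pos (rpow_pos_of_pos h₀ _) (rpow_pos_of_pos h₂ _))
      (rpow_pos_of_pos (by linarith) _)
  -- the key pointwise identity
  have key : ∀ θ : ℝ, 0 < θ →
      (1 - B θ / (θ * B' θ)) ^ α₀ * (B θ / (θ * B' θ)) ^ α₂
        = C * (B' θ) ^ (α₁ - (α₀ + α₂)) := by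
    intro θ hθ
    have hkeynum := heq θ hθ
    have hb : 0 < B θ := hBpos θ hθ
    have hg : 0 < θ * B' θ := lt_trans hb (hBlt θ hθ)
    have h1 : 1 - B θ / (θ * B' θ) = (θ * B' θ - B θ) / (θ * B' θ) := by
      rw [eq_div_iff hg.ne', sub_mul, div_mul_cancel₀ _ hg.ne', one_mul]
    have hexp : α₀ + α₂ - α₁ + (α₁ - (α₀ + α₂)) = 0 := by ring
    calc (1 - B θ / (θ * B' θ)) ^ α₀ * (B θ / (θ * B' θ)) ^ α₂
        = ((θ * B' θ - B θ) ^ α₀ * (B θ) ^ α₂) / ((θ * B' θ) ^ α₀ * (θ * B' θ) ^ α₂) := by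
          rw [h1, Real.div_rpow (by nlinarith [hBlt θ hθ]) hg.le, Real.div_rpow hb.le hg.le]
          ring
      _ = (C * θ ^ (α₀ + α₂ - α₁) * (θ * B' θ) ^ α₁) / (θ * B' θ) ^ (α₀ + α₂) := by
          rw [hkeynum, ← Real.rpow_add hg]
      _ = C * θ ^ (α₀ + α₂ - α₁) * (θ * B' θ) ^ (α₁ - (α₀ + α₂)) := by
          rw [Real.rpow_sub hg]; ring
      _ = C * (θ ^ (α₀ + α₂ - α₁) * θ ^ (α₁ - (α₀ + α₂))) * (B' θ) ^ (α₁ - (α₀ + α₂)) := by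
          rw [Real.mul_rpow hθ.le (hB'pos θ hθ).le]; ring
      _ = C * (B' θ) ^ (α₁ - (α₀ + α₂)) := by
          rw [← Real.rpow_add hθ, hexp, Real.rpow_zero, mul_one]
  have hx01 : ∀ θ : ℝ, 0 < θ →
      0 < B θ / (θ * B' θ) ∧ B θ / (θ * B' θ) < 1 := by
    intro θ hθ
    have hb : 0 < B θ := hBpos θ hθ
    have hg : 0 < θ * B' θ := lt_trans hb (hBlt θ hθ)
    exact ⟨div_pos hb hg, (div_lt_one hg).2 (hBlt θ hθ)⟩
  have hle : ∀ θ : ℝ, 0 < θ → C * (B' θ) ^ (α₁ - (α₀ + α₂)) ≤ C₀ := by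
    intro θ hθ
    rw [← key θ hθ]
    exact amgm_le h₀ h₂ (hx01 θ hθ).1 (hx01 θ hθ).2
  rcases lt_trichotomy α₁ (α₀ + α₂) with hlt | heq₁ | hgt
  · -- impossible: δ < 0
    exfalso
    have hδ : α₁ - (α₀ + α₂) < 0 := by linarith
    set m : ℝ := (C₀ / C) ^ (α₁ - (α₀ + α₂))⁻¹ with hm_def
    have hmpos : 0 < m := rpow_pos_of_pos (div_pos hC₀pos hCpos) _
    have hlow : ∀ θ : ℝ, 0 < θ → m ≤ B' θ := by
      intro θ hθ
      by_contra h
      push_neg at h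
      have h2 : m ^ (α₁ - (α₀ + α₂)) < (B' θ) ^ (α₁ - (α₀ + α₂)) :=
        Real.rpow_lt_rpow_of_neg (hB'pos θ hθ) h hδ
      rw [hm_def, Real.rpow_inv_rpow (div_pos hC₀pos hCpos).le hδ.ne] at h2
      have h3 : C₀ < C * (B' θ) ^ (α₁ - (α₀ + α₂)) := by
        rw [div_lt_iff₀ hCpos] at h2; linarith [h2]
      exact absurd (hle θ hθ) (not_le.2 h3)
    have hc : ContinuousWithinAt B' (Set.Ici 0) 0 := (hderiv2 0 Set.self_mem_Ici).continuousWithinAt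
    have ht : Tendsto B' (nhdsWithin 0 (Set.Ioi 0)) (nhds 0) := by
      have h := hc.tendsto
      rw [hB'0] at h
      exact h.mono_left (nhdsWithin_mono 0 Set.Ioi_subset_Ici_self)
    have hev : ∀ᶠ θ in nhdsWithin (0:ℝ) (Set.Ioi 0), B' θ < m :=
      ht.eventually_lt_const hmpos
    obtain ⟨θ, hθm, hθpos⟩ := (hev.and eventually_mem_nhdsWithin).exists
    exact absurd (hlow θ hθpos) (not_le.2 hθm)
  · -- δ = 0
    refine ⟨heq₁, ?_⟩
    intro θ hθ
    have hk := key θ hθ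
    rw [heq₁, sub_self, Real.rpow_zero, mul_one] at hk
    have hCC : C = C₀ := by rw [hC_def, hC₀_def, heq₁]
    by_contra hne
    have hlt2 := amgm_lt h₀ h₂ (hx01 θ hθ).1 (hx01 θ hθ).2 hne
    rw [← hC₀_def, ← hCC, hk] at hlt2
    exact lt_irrefl _ hlt2
  · -- impossible: δ > 0
    exfalso
    have hδ : 0 < α₁ - (α₀ + α₂) := by linarith
    set M : ℝ := (C₀ / C) ^ (α₁ - (α₀ + α₂))⁻¹ with hM_def
    have hMpos : 0 < M := rpow_pos_of_pos (div_pos hC₀pos hCpos) _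
    have hup : ∀ θ : ℝ, 0 < θ → B' θ ≤ M := by
      intro θ hθ
      by_contra h
      push_neg at h
      have h2 : M ^ (α₁ - (α₀ + α₂)) < (B' θ) ^ (α₁ - (α₀ + α₂)) :=
        Real.rpow_lt_rpow hMpos.le h hδ
      rw [hM_def, Real.rpow_inv_rpow (div_pos hC₀pos hCpos).le hδ.ne'] at h2
      have h3 : C₀ < C * (B' θ) ^ (α₁ - (α₀ + α₂)) := by
        rw [div_lt_iff₀ hCpos] at h2; linarith
      exact absurd (hle θ hθ) (not_le.2 h3)
    have hbdd : BddAbove (B' '' Set.Ici 1) := by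
      refine ⟨M, ?_⟩
      rintro y ⟨t, ht, rfl⟩
      exact hup t (lt_of_lt_of_le one_pos ht)
    have hne1 : (B' '' Set.Ici 1).Nonempty := ⟨B' 1, 1, Set.self_mem_Ici, rfl⟩
    set L : ℝ := sSup (B' '' Set.Ici 1) with hL_def
    have hL1 : B' 1 ≤ L := le_csSup hbdd ⟨1, Set.self_mem_Ici, rfl⟩
    have hLle : ∀ θ : ℝ, 1 ≤ θ → B' θ ≤ L := fun θ h => le_csSup hbdd ⟨θ, h, rfl⟩
    have hB'1 : 0 < B' 1 := hB'pos 1 one_pos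
    have hLpos : 0 < L := lt_of_lt_of_le hB'1 hL1
    set c : ℝ := C * (B' 1) ^ (α₁ - (α₀ + α₂)) with hc_def
    have hcpos : 0 < c := mul_pos hCpos (rpow_pos_of_pos hB'1 _)
    set η : ℝ := min 1 ((c / 2) ^ (α₀⁻¹)) with hη_def
    have hηpos : 0 < η := lt_min one_pos (rpow_pos_of_pos (by positivity) _)
    have hη1 : η ≤ 1 := min_le_left _ _
    have hηα : η ^ α₀ < c := by
      calc η ^ α₀ ≤ ((c / 2) ^ (α₀⁻¹)) ^ α₀ :=
            Real.rpow_le_rpow hηpos.le (min_le_right _ _) h₀.le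
        _ = c / 2 := Real.rpow_inv_rpow (by positivity) h₀.ne'
        _ < c := by linarith
    have hεpos : 0 < η * L / 4 := by
      have := mul_pos hηpos hLpos; linarith
    obtain ⟨y, ⟨T, hT1, rfl⟩, hTgt⟩ :=
      exists_lt_of_lt_csSup hne1 (by linarith : L - η * L / 4 < L)
    have hT1' : (1:ℝ) ≤ T := hT1
    have hTpos : 0 < T := lt_of_lt_of_le one_pos hT1'
    set θ : ℝ := max (4 * T / η) (T + 1) with hθ_def
    have hθT : T < θ := lt_of_lt_of_le (lt_add_one T) (le_max_right _ _)
    have hθ1 : 1 ≤ θ := by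
      have := le_max_right (4 * T / η) (T + 1); linarith
    have hθpos : 0 < θ := lt_trans hTpos hθT
    have h4T : 4 * T ≤ η * θ := by
      have h := le_max_left (4 * T / η) (T + 1)
      rw [div_le_iff₀ hηpos] at h
      linarith
    have hB'θL : B' θ ≤ L := hLle θ hθ1
    have hB'Tθ : B' T ≤ B' θ := (deriv_mono hconv hderiv hTpos.le hθT).le
    have hBlow : (θ - T) * B' T ≤ B θ := by
      have h := tangent_fact hconv hderiv hTpos.le hθT
      nlinarith [hBpos T hTpos]
    have hb : 0 < B θ := hBpos θ hθpos
    have hg : 0 < θ * B' θ := lt_trans hb (hBlt θ hθpos)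
    have hnum : θ * B' θ - B θ ≤ θ * (η * L / 4) + T * L := by
      have hp1 : θ * B' θ ≤ θ * L := mul_le_mul_of_nonneg_left hB'θL hθpos.le
      have hp2 : (θ - T) * (L - η * L / 4) ≤ (θ - T) * B' T :=
        mul_le_mul_of_nonneg_left hTgt.le (by linarith)
      have hp2' : (θ - T) * (L - η * L / 4) = θ * L - θ * (η * L / 4) - T * L + T * (η * L / 4) := by
        ring
      have hp3 : 0 ≤ T * (η * L / 4) := le_of_lt (mul_pos hTpos hεpos)
      linarith [hp1, hp2, hBlow, hp3]
    have hLhalf : L / 2 ≤ B' θ := by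
      have h5 : 0 ≤ (1 - η) * L := mul_nonneg (by linarith) hLpos.le
      have h6 : (1 - η) * L = L - η * L := by ring
      linarith
    have hfrac : (θ * B' θ - B θ) / (θ * B' θ) ≤ η := by
      rw [div_le_iff₀ hg]
      have h7 : 4 * T * L ≤ η * θ * L := mul_le_mul_of_nonneg_right h4T hLpos.le
      have h8 : η * θ * (L / 2) ≤ η * θ * B' θ :=
        mul_le_mul_of_nonneg_left hLhalf (mul_pos hηpos hθpos).le
      nlinarith [h7, h8, hnum]
    have h1x : 1 - B θ / (θ * B' θ) ≤ η := by
      have h1 : 1 - B θ / (θ * B' θ) = (θ * B' θ - B θ) / (θ * B' θ) := by rw [eq_div_iff hg.ne', sub_mul, div_mul_cancel₀ _ hg.ne', one_mul]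
      rw [h1]; exact hfrac
    obtain ⟨hx0, hx1⟩ := hx01 θ hθpos
    have hu : (1 - B θ / (θ * B' θ)) ^ α₀ * (B θ / (θ * B' θ)) ^ α₂ ≤ η ^ α₀ := by
      calc (1 - B θ / (θ * B' θ)) ^ α₀ * (B θ / (θ * B' θ)) ^ α₂
          ≤ η ^ α₀ * 1 :=
            mul_le_mul (Real.rpow_le_rpow (by linarith) h1x h₀.le)
              (Real.rpow_le_one hx0.le hx1.le h₂.le)
              (Real.rpow_nonneg hx0.le _) (Real.rpow_nonneg hηpos.le _)
        _ = η ^ α₀ := mul_one _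
    have h1θ : 1 < θ := by linarith [hθT, hT1']
    have hcθ : c ≤ C * (B' θ) ^ (α₁ - (α₀ + α₂)) := by
      rw [hc_def]
      exact mul_le_mul_of_nonneg_left
        (Real.rpow_le_rpow hB'1.le (deriv_mono hconv hderiv (by norm_num) h1θ).le hδ.le)
        hCpos.le
    rw [← key θ hθpos] at hcθ
    linarith [hu, hcθ, hηα]
end

section
/- Let B : [0,∞) → ℝ be twice differentiable, strictly convex with B(0) = B'(0) = 0, and suppose for some α₀, α₁, α₂ > 0 the equation (θB'(θ) − B(θ))^{α₀}(B(θ))^{α₂} = C θ^{β}(θB'(θ))^{α₁} holds for all θ > 0 with β = α₀+α₂−α₁ and C = α₀^{α₀}α₂^{α₂}/α₁^{α₁}. Then lim_{θ→∞} B'(θ) = ∞. -/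
open Filter

/-- Under the logarithmic-Bregman equality constraint, the derivative `B'` must tend
to infinity: `lim_{θ→∞} B'(θ) = ∞`. -/
theorem lbf_deriv_tendsto_atTop
    (B B' B'' : ℝ → ℝ)
    (hconv : StrictConvexOn ℝ (Set.Ici 0) B)
    (hderiv : ∀ y ∈ Set.Ici (0 : ℝ), HasDerivWithinAt B (B' y) (Set.Ici 0) y)
    (hderiv2 : ∀ y ∈ Set.Ici (0 : ℝ), HasDerivWithinAt B' (B'' y) (Set.Ici 0) y)
    (hB0 : B 0 = 0) (hB'0 : B' 0 = 0)
    (α₀ α₁ α₂ : ℝ) (h₀ : 0 < α₀) (h₁ : 0 < α₁) (h₂ : 0 < α₂)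
    (heq : ∀ θ > (0 : ℝ),
      (θ * B' θ - B θ) ^ α₀ * (B θ) ^ α₂ =
        (α₀ ^ α₀ * α₂ ^ α₂ / α₁ ^ α₁) * θ ^ (α₀ + α₂ - α₁) * (θ * B' θ) ^ α₁) :
    Tendsto B' atTop atTop := by
  set C : ℝ := α₀ ^ α₀ * α₂ ^ α₂ / α₁ ^ α₁ with hC
  have hCpos : 0 < C := div_pos (mul_pos (Real.rpow_pos_of_pos h₀ _)
    (Real.rpow_pos_of_pos h₂ _)) (Real.rpow_pos_of_pos h₁ _)
  -- strict monotonicity of B'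
  have hmono : StrictMonoOn B' (Set.Ici 0) := by
    intro x hx y hy hxy
    exact (hconv.lt_slope_of_hasDerivWithinAt hx hy hxy (hderiv x hx)).trans
      (hconv.slope_lt_of_hasDerivWithinAt hx hy hxy (hderiv y hy))
  have hmem : ∀ θ : ℝ, 0 < θ → θ ∈ Set.Ici (0:ℝ) := fun θ hθ => le_of_lt hθ
  have hB'pos : ∀ θ : ℝ, 0 < θ → 0 < B' θ := fun θ hθ => by
    have := hmono Set.self_mem_Ici (hmem θ hθ) hθ
    rwa [hB'0] at this
  have hBpos : ∀ θ : ℝ, 0 < θ → 0 < B θ := fun θ hθ => by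
    have h := hconv.lt_slope_of_hasDerivWithinAt Set.self_mem_Ici (hmem θ hθ) hθ
      (hderiv 0 Set.self_mem_Ici)
    rw [hB'0, slope_def_field, hB0] at h
    simp only [sub_zero] at h
    exact (div_pos_iff.mp h).resolve_right (fun h' => absurd h'.2 (not_lt.2 hθ.le)) |>.1
  have hBlt : ∀ θ : ℝ, 0 < θ → B θ < θ * B' θ := fun θ hθ => by
    have h := hconv.slope_lt_of_hasDerivWithinAt Set.self_mem_Ici (hmem θ hθ) hθ
      (hderiv θ (hmem θ hθ))
    rw [slope_def_field, hB0] at h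
    simp only [sub_zero] at h
    calc B θ = (B θ / θ) * θ := by field_simp
    _ < B' θ * θ := by exact mul_lt_mul_of_pos_right h hθ
    _ = θ * B' θ := mul_comm _ _
  -- by contradiction
  by_contra hnot
  -- the auxiliary globally monotone function
  set g : ℝ → ℝ := fun x => B' (max x 0) with hg
  have hgmono : Monotone g := fun a b hab =>
    hmono.monotoneOn (le_max_right a 0) (le_max_right b 0) (max_le_max hab le_rfl)
  have hgeq : g =ᶠ[atTop] B' := by
    filter_upwards [eventually_ge_atTop (0:ℝ)] with x hx
    simp [hg, max_eq_left hx]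
  have hbdd : BddAbove (Set.range g) := by
    by_contra hb
    exact hnot ((tendsto_atTop_atTop_of_monotone' hgmono hb).congr' hgeq)
  obtain ⟨c, hgc⟩ : ∃ c, Tendsto g atTop (nhds c) := ⟨_, tendsto_atTop_ciSup hgmono hbdd⟩
  have hB'c : Tendsto B' atTop (nhds c) := hgc.congr' hgeq
  have hle : ∀ θ : ℝ, 0 ≤ θ → B' θ ≤ c := fun θ hθ => by
    have h := hgmono.ge_of_tendsto hgc θ
    simpa [hg, max_eq_left hθ] using h
  have hcpos : 0 < c := by
    have h1 : B' 0 < B' 1 := hmono Set.self_mem_Ici (by norm_num) one_pos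
    rw [hB'0] at h1
    exact h1.trans_le (hle 1 zero_le_one)
  -- B θ / θ tends to c
  have hBover : Tendsto (fun θ => B θ / θ) atTop (nhds c) := by
    rw [tendsto_order]
    constructor
    · intro a ha
      obtain ⟨x, hx⟩ : ∃ x, a < g x :=
        (hgc.eventually (eventually_gt_nhds ha)).exists
      set t : ℝ := max x 1 with ht
      have ht1 : (1:ℝ) ≤ t := le_max_right _ _
      have htpos : 0 < t := lt_of_lt_of_le one_pos ht1
      have hat : a < B' t :=
        hx.trans_le (hmono.monotoneOn (le_max_right x 0) (le_of_lt htpos)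
          (max_le (le_max_left _ _) (le_trans zero_le_one ht1)))
      have hlim : Tendsto (fun θ : ℝ => (B t + (θ - t) * B' t) / θ) atTop (nhds (B' t)) := by
        have h0 : Tendsto (fun θ : ℝ => (B t - t * B' t) / θ + B' t) atTop
            (nhds (0 + B' t)) :=
          (tendsto_const_nhds.div_atTop tendsto_id).add tendsto_const_nhds
        rw [zero_add] at h0
        refine h0.congr' ?_
        filter_upwards [eventually_ne_atTop (0:ℝ)] with θ hθ
        field_simp
        ring
      have hev1 : ∀ᶠ θ in atTop, a < (B t + (θ - t) * B' t) / θ :=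
        hlim.eventually (eventually_gt_nhds hat)
      filter_upwards [hev1, eventually_gt_atTop t] with θ hθ1 hθ2
      have hθpos : 0 < θ := htpos.trans hθ2
      have hs := hconv.convexOn.le_slope_of_hasDerivWithinAt (hmem t htpos) (hmem θ hθpos)
        hθ2 (hderiv t (hmem t htpos))
      rw [slope_def_field] at hs
      have hd : B t + (θ - t) * B' t ≤ B θ := by
        have h2 : (θ - t) * B' t ≤ B θ - B t := by
          have := mul_le_mul_of_nonneg_left hs (le_of_lt (sub_pos.2 hθ2))
          rwa [mul_div_cancel₀ _ (sub_ne_zero.2 (ne_of_gt hθ2))] at this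
        linarith
      calc a < (B t + (θ - t) * B' t) / θ := hθ1
        _ ≤ B θ / θ := by gcongr
    · intro a ha
      filter_upwards [eventually_gt_atTop (0:ℝ)] with θ hθ
      have h1 : B θ / θ < B' θ := by
        have := hBlt θ hθ
        rw [div_lt_iff₀ hθ]
        linarith [hBlt θ hθ]
      exact h1.trans ((hle θ hθ.le).trans_lt ha)
  -- the rescaled equation
  have key : ∀ᶠ θ in atTop,
      (B' θ - B θ / θ) ^ α₀ * (B θ / θ) ^ α₂ = C * (B' θ) ^ α₁ := by
    filter_upwards [eventually_gt_atTop (0:ℝ)] with θ hθ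
    have h := heq θ hθ
    have hune : (0:ℝ) < θ * B' θ - B θ := sub_pos.2 (hBlt θ hθ)
    have hwpos : (0:ℝ) < θ * B' θ := mul_pos hθ (hB'pos θ hθ)
    have e1 : B' θ - B θ / θ = (θ * B' θ - B θ) / θ := by field_simp
    have e2 : B' θ = (θ * B' θ) / θ := by field_simp
    rw [e1, Real.div_rpow hune.le hθ.le, Real.div_rpow (hBpos θ hθ).le hθ.le]
    nth_rewrite 2 [e2]
    rw [Real.div_rpow hwpos.le hθ.le]
    rw [Real.rpow_sub hθ, Real.rpow_add hθ] at h
    have hθ0 : θ ^ α₀ ≠ 0 := (Real.rpow_pos_of_pos hθ α₀).ne'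
    have hθ2' : θ ^ α₂ ≠ 0 := (Real.rpow_pos_of_pos hθ α₂).ne'
    have hθ1' : θ ^ α₁ ≠ 0 := (Real.rpow_pos_of_pos hθ α₁).ne'
    field_simp at h ⊢
    linarith [h]
  -- limits
  have t1 : Tendsto (fun θ => (B' θ - B θ / θ) ^ α₀) atTop (nhds 0) := by
    have hsub : Tendsto (fun θ => B' θ - B θ / θ) atTop (nhds 0) := by
      have := hB'c.sub hBover
      rwa [sub_self] at this
    have := (Real.continuousAt_rpow_const 0 α₀ (Or.inr h₀.le)).tendsto.comp hsub
    simpa [Function.comp_def, Real.zero_rpow h₀.ne'] using this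
  have t2 : Tendsto (fun θ => (B θ / θ) ^ α₂) atTop (nhds (c ^ α₂)) :=
    (Real.continuousAt_rpow_const c α₂ (Or.inl hcpos.ne')).tendsto.comp hBover
  have hL : Tendsto (fun θ => (B' θ - B θ / θ) ^ α₀ * (B θ / θ) ^ α₂) atTop (nhds 0) := by
    simpa using t1.mul t2
  have hR : Tendsto (fun θ => C * (B' θ) ^ α₁) atTop (nhds (C * c ^ α₁)) :=
    tendsto_const_nhds.mul
      ((Real.continuousAt_rpow_const c α₁ (Or.inl hcpos.ne')).tendsto.comp hB'c)
  have h0 : (0:ℝ) = C * c ^ α₁ := tendsto_nhds_unique (hL.congr' key) hR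
  have : 0 < C * c ^ α₁ := mul_pos hCpos (Real.rpow_pos_of_pos hcpos _)
  linarith
end

section
/- For probability densities f, g with respect to μ and α > 0, the DPD divergence (1/α)∫[g^{α+1} + α f^{α+1} − (α+1) f^α g] dμ is nonnegative, with equality if and only if f = g a.e. [μ]. -/
open MeasureTheory

lemma dpd_pointwise_pos {α : ℝ} (hα : 0 < α) {a b : ℝ} (ha : 0 ≤ a) (hb : 0 ≤ b)
    (hab : a ≠ b) :
    0 < b ^ (α + 1) + α * a ^ (α + 1) - (α + 1) * a ^ α * b := by
  have hp1 : (1 : ℝ) ≤ α + 1 := by linarith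
  have hsc : StrictConvexOn ℝ (Set.Ici (0:ℝ)) fun x : ℝ => x ^ (α + 1) :=
    strictConvexOn_rpow (by linarith)
  have hderiv : HasDerivAt (fun x : ℝ => x ^ (α + 1)) ((α + 1) * a ^ α) a := by
    have := Real.hasDerivAt_rpow_const (x := a) (p := α + 1) (Or.inr hp1)
    simpa using this
  have haa : a ^ (α + 1) = a ^ α * a := by
    rcases eq_or_lt_of_le ha with h | h
    · rw [← h]; rw [Real.zero_rpow (by linarith), Real.zero_rpow hα.ne', zero_mul]
    · rw [Real.rpow_add_one h.ne']
  rcases lt_or_gt_of_ne hab with h | h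
  · have := hsc.lt_slope_of_hasDerivAt (Set.mem_Ici.2 ha) (Set.mem_Ici.2 hb) h hderiv
    rw [slope_def_field] at this
    have hba : 0 < b - a := by linarith
    rw [lt_div_iff₀ hba] at this
    nlinarith [this, haa]
  · have := hsc.slope_lt_of_hasDerivAt (Set.mem_Ici.2 hb) (Set.mem_Ici.2 ha) h hderiv
    rw [slope_def_field] at this
    have hba : 0 < a - b := by linarith
    rw [div_lt_iff₀ hba] at this
    nlinarith [this, haa]

lemma dpd_pointwise {α : ℝ} (hα : 0 < α) {a b : ℝ} (ha : 0 ≤ a) (hb : 0 ≤ b) :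
    0 ≤ b ^ (α + 1) + α * a ^ (α + 1) - (α + 1) * a ^ α * b ∧
      (b ^ (α + 1) + α * a ^ (α + 1) - (α + 1) * a ^ α * b = 0 ↔ a = b) := by
  have haa : a ^ (α + 1) = a ^ α * a := by
    rcases eq_or_lt_of_le ha with h | h
    · rw [← h]; rw [Real.zero_rpow (by linarith), Real.zero_rpow hα.ne', zero_mul]
    · rw [Real.rpow_add_one h.ne']
  by_cases hab : a = b
  · subst hab
    constructor
    · nlinarith [haa]
    · constructor
      · intro _; rfl
      · intro _; nlinarith [haa]
  · have := dpd_pointwise_pos hα ha hb hab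
    exact ⟨this.le, by constructor <;> intro h <;> [linarith; exact absurd h hab]⟩

/-- The density power divergence
`(1/α)∫[g^{α+1} + α f^{α+1} − (α+1) f^α g]` is nonnegative, with equality iff
`f = g` a.e. -/
theorem dpd_nonneg_iff
    {μ : Measure ℝ} {f g : ℝ → ℝ} {α : ℝ} (hα : 0 < α)
    (hf : Measurable f) (hg : Measurable g)
    (hf0 : ∀ x, 0 ≤ f x) (hg0 : ∀ x, 0 ≤ g x)
    (hfint : ∫ x, f x ∂μ = 1) (hgint : ∫ x, g x ∂μ = 1)
    (hfg : Integrable (fun x => f x ^ α * g x) μ)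
    (hf1 : Integrable (fun x => f x ^ (α + 1)) μ)
    (hg1 : Integrable (fun x => g x ^ (α + 1)) μ) :
    0 ≤ (1 / α) * ∫ x, (g x ^ (α + 1) + α * f x ^ (α + 1)
        - (α + 1) * f x ^ α * g x) ∂μ ∧
    ((1 / α) * ∫ x, (g x ^ (α + 1) + α * f x ^ (α + 1)
        - (α + 1) * f x ^ α * g x) ∂μ = 0 ↔ f =ᵐ[μ] g) := by
  set φ : ℝ → ℝ := fun x => g x ^ (α + 1) + α * f x ^ (α + 1)
      - (α + 1) * f x ^ α * g x with hφ
  have hφnn : ∀ x, 0 ≤ φ x := fun x => (dpd_pointwise hα (hf0 x) (hg0 x)).1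
  have hφint : Integrable φ μ := by
    have h1 : Integrable (fun x => (α + 1) * f x ^ α * g x) μ := by
      simpa [mul_assoc] using hfg.const_mul (α + 1)
    exact (hg1.add (hf1.const_mul α)).sub h1
  have hI : 0 ≤ ∫ x, φ x ∂μ := integral_nonneg hφnn
  have hiff : (∫ x, φ x ∂μ) = 0 ↔ f =ᵐ[μ] g := by
    rw [integral_eq_zero_iff_of_nonneg hφnn hφint]
    constructor
    · intro h
      filter_upwards [h] with x hx
      exact ((dpd_pointwise hα (hf0 x) (hg0 x)).2).1 hx
    · intro h
      filter_upwards [h] with x hx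
      exact ((dpd_pointwise hα (hf0 x) (hg0 x)).2).2 hx
  have hαpos : 0 < 1 / α := by positivity
  refine ⟨mul_nonneg hαpos.le hI, ?_⟩
  rw [mul_eq_zero]
  simp only [hαpos.ne', false_or]
  exact hiff
end

section
/- For fixed positive densities f, g with ∫f^α g, ∫f^{α+1}, ∫g^{α+1} finite and positive, the LDPD tends to the Kullback–Leibler divergence as α → 0: lim_{α→0⁺} [log∫f^{α+1} − ((1+α)/α)log∫f^α g + (1/α)log∫g^{α+1}] = ∫ g log(g/f) dμ. -/
open MeasureTheory Filter

/-- lower chord bound: `α * log t ≤ t^α - 1` for `t > 0`, `α` real. -/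
private lemma chord_lb {t : ℝ} (ht : 0 < t) (α : ℝ) :
    α * Real.log t ≤ t ^ α - 1 := by
  have h := Real.add_one_le_exp (α * Real.log t)
  rw [Real.rpow_def_of_pos ht, mul_comm (Real.log t) α]
  linarith

/-- upper chord bound: `t^α - 1 ≤ α * (t - 1)` for `t > 0`, `0 < α ≤ 1`. -/
private lemma chord_ub {t : ℝ} (ht : 0 < t) {α : ℝ} (hα : 0 < α) (hα1 : α ≤ 1) :
    t ^ α - 1 ≤ α * (t - 1) := by
  have h := Real.geom_mean_le_arith_mean2_weighted (by linarith : (0:ℝ) ≤ 1 - α)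
    hα.le (zero_le_one) ht.le (by ring)
  rw [Real.one_rpow, one_mul] at h
  nlinarith

/-- `|exp a - exp b| ≤ |a - b|` for nonpositive `a, b`. -/
private lemma exp_contract {a b : ℝ} (ha : a ≤ 0) (hb : b ≤ 0) :
    |Real.exp a - Real.exp b| ≤ |a - b| := by
  wlog hab : b ≤ a generalizing a b
  · rw [abs_sub_comm, abs_sub_comm a b]; exact this hb ha (le_of_not_ge hab)
  have h1 : Real.exp a ≤ 1 := Real.exp_le_one_iff.mpr ha
  have h2 := Real.add_one_le_exp (b - a)
  have h3 : Real.exp b ≥ Real.exp a * (1 + (b - a)) := by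
    have := Real.exp_le_exp.mpr hab
    calc Real.exp a * (1 + (b - a)) = Real.exp a * ((b - a) + 1) := by ring
    _ ≤ Real.exp a * Real.exp (b - a) := by
        apply mul_le_mul_of_nonneg_left h2 (Real.exp_pos a).le
    _ = Real.exp b := by rw [← Real.exp_add]; ring_nf
  have h4 : Real.exp a * (b - a) ≥ b - a := by nlinarith [Real.exp_pos a]
  have h5 : Real.exp a - Real.exp b ≤ a - b := by nlinarith
  have h6 : 0 ≤ Real.exp a - Real.exp b := by
    have := Real.exp_le_exp.mpr hab; linarith
  rw [abs_of_nonneg h6, abs_of_nonneg (by linarith : (0:ℝ) ≤ a - b)]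
  exact h5

/-- pointwise limit: `(t^α - 1)/α → log t` as `α → 0⁺`. -/
private lemma tendsto_chord {t : ℝ} (ht : 0 < t) :
    Tendsto (fun α : ℝ => (t ^ α - 1) / α) (nhdsWithin 0 (Set.Ioi 0))
      (nhds (Real.log t)) := by
  have hd : HasDerivAt (fun α : ℝ => Real.exp (α * Real.log t)) (Real.log t) 0 := by
    have h1 : HasDerivAt (fun α : ℝ => α * Real.log t) (Real.log t) 0 :=
      hasDerivAt_mul_const _
    simpa using h1.exp
  have := hasDerivAt_iff_tendsto_slope.mp hd
  have hmono : nhdsWithin (0:ℝ) (Set.Ioi 0) ≤ nhdsWithin (0:ℝ) {(0:ℝ)}ᶜ :=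
    nhdsWithin_mono _ (fun x hx => ne_of_gt hx)
  have h2 := this.mono_left hmono
  refine h2.congr' ?_
  filter_upwards [self_mem_nhdsWithin] with α (hα : α ∈ Set.Ioi (0:ℝ))
  simp only [slope_def_field, div_eq_iff (ne_of_gt (Set.mem_Ioi.mp hα))]
  rw [Real.rpow_def_of_pos ht, mul_comm (Real.log t) α]
  field_simp
  simp

/-- The function `V t = log(1+t)/t` (with `V 0 = 1`) tends to 1 at 0. -/
private noncomputable def V (t : ℝ) : ℝ := if t = 0 then 1 else Real.log (1 + t) / t

private lemma V_tendsto : Tendsto V (nhds 0) (nhds 1) := by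
  rw [← nhdsNE_sup_pure (0:ℝ), tendsto_sup]
  constructor
  · have hd : HasDerivAt (fun t : ℝ => Real.log (1 + t)) 1 0 := by
      have h1 : HasDerivAt (fun t : ℝ => 1 + t) 1 0 := by
        simpa using (hasDerivAt_id (0:ℝ)).const_add 1
      simpa using h1.log (by norm_num)
    have := hasDerivAt_iff_tendsto_slope.mp hd
    refine this.congr' ?_
    filter_upwards [self_mem_nhdsWithin] with t (ht : t ≠ 0)
    simp [V, slope_def_field, ht]
  · rw [Filter.tendsto_pure_left]
    intro s hs
    have : V 0 = 1 := by simp [V]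
    rw [this]; exact mem_of_mem_nhds hs

private lemma log_one_add_eq {u : ℝ} (hu : -1 < u) : Real.log (1 + u) = u * V u := by
  by_cases h : u = 0
  · simp [h, V]
  · simp [V, h]; field_simp


private lemma chord_abs {t α : ℝ} (ht : 0 < t) (hα : 0 < α) (hα1 : α ≤ 1) :
    |(t ^ α - 1) / α| ≤ |Real.log t| + |t - 1| := by
  have h1 := chord_lb ht α
  have h2 := chord_ub ht hα hα1
  have hlo : Real.log t ≤ (t ^ α - 1) / α := by
    rw [le_div_iff₀ hα]; linarith
  have hhi : (t ^ α - 1) / α ≤ t - 1 := by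
    rw [div_le_iff₀ hα]; linarith
  have := neg_abs_le (Real.log t)
  have := le_abs_self (t - 1)
  rw [abs_le]; constructor <;> nlinarith [abs_nonneg (Real.log t), abs_nonneg (t-1)]

private lemma small_abs {a b α : ℝ} (ha : 0 < a) (ha1 : a ≤ 1) (hb : 0 < b) (hb1 : b ≤ 1)
    (hα : 0 < α) : |(b ^ α - a ^ α) / α| ≤ |Real.log b - Real.log a| := by
  have e1 : b ^ α = Real.exp (α * Real.log b) := by
    rw [Real.rpow_def_of_pos hb, mul_comm]
  have e2 : a ^ α = Real.exp (α * Real.log a) := by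
    rw [Real.rpow_def_of_pos ha, mul_comm]
  have hlb : Real.log b ≤ 0 := Real.log_nonpos hb.le hb1
  have hla : Real.log a ≤ 0 := Real.log_nonpos ha.le ha1
  have h := exp_contract (mul_nonpos_iff.mpr (Or.inl ⟨hα.le, hlb⟩))
    (mul_nonpos_iff.mpr (Or.inl ⟨hα.le, hla⟩))
  rw [← e1, ← e2] at h
  have : α * Real.log b - α * Real.log a = α * (Real.log b - Real.log a) := by ring
  rw [this, abs_mul, abs_of_pos hα] at h
  rw [abs_div, abs_of_pos hα, div_le_iff₀ hα]
  linarith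

set_option maxHeartbeats 2000000 in
/-- The LDPD tends to the Kullback–Leibler divergence as `α → 0⁺`. -/
theorem ldpd_tendsto_kl
    {μ : Measure ℝ} {f g : ℝ → ℝ}
    (hf : Measurable f) (hg : Measurable g)
    (hf0 : ∀ x, 0 < f x) (hg0 : ∀ x, 0 < g x)
    (hfint : ∫ x, f x ∂μ = 1) (hgint : ∫ x, g x ∂μ = 1)
    (hfg : ∀ α > (0 : ℝ), Integrable (fun x => f x ^ α * g x) μ)
    (hf1 : ∀ α > (0 : ℝ), Integrable (fun x => f x ^ (α + 1)) μ)
    (hg1 : ∀ α > (0 : ℝ), Integrable (fun x => g x ^ (α + 1)) μ)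
    (hfgpos : ∀ α > (0 : ℝ), 0 < ∫ x, f x ^ α * g x ∂μ)
    (hf1pos : ∀ α > (0 : ℝ), 0 < ∫ x, f x ^ (α + 1) ∂μ)
    (hg1pos : ∀ α > (0 : ℝ), 0 < ∫ x, g x ^ (α + 1) ∂μ)
    (hkl : Integrable (fun x => g x * Real.log (g x / f x)) μ) :
    Tendsto (fun α : ℝ =>
        Real.log (∫ x, f x ^ (α + 1) ∂μ)
          - ((1 + α) / α) * Real.log (∫ x, f x ^ α * g x ∂μ)
          + (1 / α) * Real.log (∫ x, g x ^ (α + 1) ∂μ))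
      (nhdsWithin 0 (Set.Ioi 0))
      (nhds (∫ x, g x * Real.log (g x / f x) ∂μ)) := by
  classical
  set l := nhdsWithin (0:ℝ) (Set.Ioi 0) with hl
  set KL := ∫ x, g x * Real.log (g x / f x) ∂μ with hKLdef
  -- basic integrability
  have hginteg : Integrable g μ := by
    by_contra h
    rw [integral_undef h] at hgint
    exact one_ne_zero hgint.symm
  have hfinteg : Integrable f μ := by
    by_contra h
    rw [integral_undef h] at hfint
    exact one_ne_zero hfint.symm
  have hg2 : Integrable (fun x => g x * g x) μ := by
    refine (hg1 1 one_pos).congr (Filter.Eventually.of_forall fun x => ?_)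
    show g x ^ ((1:ℝ) + 1) = g x * g x
    rw [Real.rpow_add_one (ne_of_gt (hg0 x)), Real.rpow_one]
  have hf2 : Integrable (fun x => f x * f x) μ := by
    refine (hf1 1 one_pos).congr (Filter.Eventually.of_forall fun x => ?_)
    show f x ^ ((1:ℝ) + 1) = f x * f x
    rw [Real.rpow_add_one (ne_of_gt (hf0 x)), Real.rpow_one]
  have hgf : Integrable (fun x => g x * f x) μ := by
    refine Integrable.mono' ((hg2.add hf2).div_const 2) ((hg.mul hf).aestronglyMeasurable)
      (Filter.Eventually.of_forall fun x => ?_)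
    rw [Real.norm_eq_abs, abs_of_nonneg (mul_nonneg (hg0 x).le (hf0 x).le)]
    have := sq_nonneg (g x - f x)
    simp only [Pi.add_apply, Pi.div_apply]
    nlinarith
  -- the dominating function
  set D : ℝ → ℝ := fun x =>
    2 * (g x * g x) + 2 * (g x * f x) + 2 * g x + 2 * |g x * Real.log (g x / f x)| with hD
  have hDint : Integrable D μ := by
    refine Integrable.add (Integrable.add (Integrable.add ?_ ?_) ?_) ?_
    · exact hg2.const_mul 2
    · exact hgf.const_mul 2
    · exact hginteg.const_mul 2
    · exact hkl.abs.const_mul 2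
  -- the key pointwise bound on Ioc 0 1
  have hbound : ∀ α ∈ Set.Ioc (0:ℝ) 1, ∀ x,
      |g x * ((g x ^ α - f x ^ α) / α)| ≤ D x := by
    rintro α ⟨hα, hα1⟩ x
    have ha := hf0 x
    have hb := hg0 x
    have hlogr : Real.log (g x / f x) = Real.log (g x) - Real.log (f x) :=
      Real.log_div (ne_of_gt hb) (ne_of_gt ha)
    rw [abs_mul, abs_of_pos hb]
    by_cases hcase : f x ≤ 1 ∧ g x ≤ 1
    · have h := small_abs ha hcase.1 hb hcase.2 hα
      have h2 : g x * |(g x ^ α - f x ^ α) / α| ≤ |g x * Real.log (g x / f x)| := by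
        rw [abs_mul, abs_of_pos hb, hlogr]
        exact mul_le_mul_of_nonneg_left h hb.le
      have hpos1 : 0 ≤ g x * g x := mul_nonneg hb.le hb.le
      have hpos2 : 0 ≤ g x * f x := mul_nonneg hb.le ha.le
      have hpos4 : (0:ℝ) ≤ |g x * Real.log (g x / f x)| := abs_nonneg _
      simp only [hD]
      linarith [hb.le]
    · -- at least one of f x, g x exceeds 1
      have hsplit : |(g x ^ α - f x ^ α) / α|
          ≤ |(g x ^ α - 1) / α| + |(f x ^ α - 1) / α| := by
        have : (g x ^ α - f x ^ α) / α = (g x ^ α - 1) / α - (f x ^ α - 1) / α := by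
          field_simp
          ring
        rw [this]
        exact abs_sub _ _
      have hga := chord_abs hb hα hα1
      have hfa := chord_abs ha hα hα1
      -- bound g x * |log (g x)|
      have hblog : g x * |Real.log (g x)| ≤ g x * g x + |g x * Real.log (g x / f x)| := by
        rcases le_or_gt 1 (g x) with hb1 | hb1
        · have : |Real.log (g x)| = Real.log (g x) := abs_of_nonneg (Real.log_nonneg hb1)
          rw [this]
          have hlb : Real.log (g x) ≤ g x - 1 := by
            have := Real.log_le_sub_one_of_pos hb
            linarith
          nlinarith [abs_nonneg (g x * Real.log (g x / f x))]
        · have hf1' : 1 ≤ f x := by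
            by_contra hc
            exact hcase ⟨le_of_not_ge (fun hh => hc (by linarith)), hb1.le⟩
          have hlogb : Real.log (g x) ≤ 0 := Real.log_nonpos hb.le hb1.le
          have hlogf : 0 ≤ Real.log (f x) := Real.log_nonneg hf1'
          have : |Real.log (g x)| = -Real.log (g x) := abs_of_nonpos hlogb
          rw [this]
          have h1 : g x * (-Real.log (g x)) ≤ g x * (Real.log (f x) - Real.log (g x)) := by
            apply mul_le_mul_of_nonneg_left _ hb.le
            linarith
          have h2 : g x * (Real.log (f x) - Real.log (g x))
              ≤ |g x * Real.log (g x / f x)| := by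
            rw [abs_mul, abs_of_pos hb, hlogr]
            have : Real.log (f x) - Real.log (g x)
                ≤ |Real.log (g x) - Real.log (f x)| := by
              rw [abs_sub_comm]; exact le_abs_self _
            exact mul_le_mul_of_nonneg_left this hb.le
          nlinarith [mul_nonneg hb.le hb.le]
      -- bound g x * |log (f x)|
      have hflog : g x * |Real.log (f x)| ≤ g x * f x + |g x * Real.log (g x / f x)| := by
        rcases le_or_gt 1 (f x) with hf1' | hf1'
        · have : |Real.log (f x)| = Real.log (f x) := abs_of_nonneg (Real.log_nonneg hf1')
          rw [this]
          have hlb : Real.log (f x) ≤ f x - 1 := by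
            have := Real.log_le_sub_one_of_pos ha
            linarith
          nlinarith [abs_nonneg (g x * Real.log (g x / f x))]
        · have hb1 : 1 ≤ g x := by
            by_contra hc
            exact hcase ⟨hf1'.le, le_of_not_ge (fun hh => hc (by linarith))⟩
          have hlogf : Real.log (f x) ≤ 0 := Real.log_nonpos ha.le hf1'.le
          have hlogb : 0 ≤ Real.log (g x) := Real.log_nonneg hb1
          have : |Real.log (f x)| = -Real.log (f x) := abs_of_nonpos hlogf
          rw [this]
          have h1 : g x * (-Real.log (f x)) ≤ g x * (Real.log (g x) - Real.log (f x)) := by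
            apply mul_le_mul_of_nonneg_left _ hb.le
            linarith
          have h2 : g x * (Real.log (g x) - Real.log (f x))
              ≤ |g x * Real.log (g x / f x)| := by
            rw [abs_mul, abs_of_pos hb, hlogr]
            exact mul_le_mul_of_nonneg_left (le_abs_self _) hb.le
          nlinarith [mul_nonneg hb.le ha.le]
      have habsb : g x * |g x - 1| ≤ g x * g x + g x := by
        rcases abs_cases (g x - 1) with ⟨h, _⟩ | ⟨h, _⟩ <;> rw [h] <;> nlinarith
      have habsa : g x * |f x - 1| ≤ g x * f x + g x := by
        rcases abs_cases (f x - 1) with ⟨h, _⟩ | ⟨h, _⟩ <;> rw [h] <;> nlinarith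
      have hmain : g x * |(g x ^ α - f x ^ α) / α|
          ≤ g x * (|Real.log (g x)| + |g x - 1| + (|Real.log (f x)| + |f x - 1|)) := by
        apply mul_le_mul_of_nonneg_left _ hb.le
        calc |(g x ^ α - f x ^ α) / α| ≤ |(g x ^ α - 1) / α| + |(f x ^ α - 1) / α| := hsplit
          _ ≤ _ := by linarith
      have hdist : g x * (|Real.log (g x)| + |g x - 1| + (|Real.log (f x)| + |f x - 1|))
          = g x * |Real.log (g x)| + g x * |g x - 1|
            + (g x * |Real.log (f x)| + g x * |f x - 1|) := by ring
      simp only [hD]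
      linarith [hmain, hblog, hflog, habsb, habsa, hdist]
  -- pointwise convergence
  have hlim : ∀ x, Tendsto (fun α : ℝ => g x * ((g x ^ α - f x ^ α) / α)) l
      (nhds (g x * Real.log (g x / f x))) := by
    intro x
    have h1 := tendsto_chord (hg0 x)
    have h2 := tendsto_chord (hf0 x)
    have h3 := ((h1.sub h2).const_mul (g x))
    have heq : Real.log (g x / f x) = Real.log (g x) - Real.log (f x) :=
      Real.log_div (ne_of_gt (hg0 x)) (ne_of_gt (hf0 x))
    rw [heq]
    refine h3.congr fun α => ?_
    rw [div_sub_div_same]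
    ring_nf
  -- measurability
  have hmeas : ∀ α : ℝ, AEStronglyMeasurable
      (fun x => g x * ((g x ^ α - f x ^ α) / α)) μ := by
    intro α
    have hgm : Measurable (fun x => g x ^ α) := by
      have : (fun x => g x ^ α) = fun x => Real.exp (Real.log (g x) * α) :=
        funext fun x => Real.rpow_def_of_pos (hg0 x) α
      rw [this]
      exact (hg.log.mul_const α).exp
    have hfm : Measurable (fun x => f x ^ α) := by
      have : (fun x => f x ^ α) = fun x => Real.exp (Real.log (f x) * α) :=
        funext fun x => Real.rpow_def_of_pos (hf0 x) α
      rw [this]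
      exact (hf.log.mul_const α).exp
    exact (hg.mul ((hgm.sub hfm).div_const α)).aestronglyMeasurable
  -- dominated convergence for Δ
  have hDelta : Tendsto (fun α : ℝ => ∫ x, g x * ((g x ^ α - f x ^ α) / α) ∂μ) l
      (nhds KL) := by
    refine tendsto_integral_filter_of_dominated_convergence D
      (Filter.Eventually.of_forall fun α => hmeas α) ?_ hDint
      (Filter.Eventually.of_forall hlim)
    filter_upwards [Ioc_mem_nhdsGT (zero_lt_one : (0:ℝ) < 1)] with α hα
    exact Filter.Eventually.of_forall fun x => by
      simpa only [Real.norm_eq_abs] using hbound α hα x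
  -- Δ α = (I α - J α)/α
  have hIJ : ∀ α : ℝ, 0 < α → ∫ x, g x * ((g x ^ α - f x ^ α) / α) ∂μ
      = ((∫ x, g x ^ (α + 1) ∂μ) - ∫ x, f x ^ α * g x ∂μ) / α := by
    intro α hα
    have heq : (fun x => g x * ((g x ^ α - f x ^ α) / α))
        = fun x => (g x ^ (α + 1) - f x ^ α * g x) / α := by
      funext x
      rw [Real.rpow_add_one (ne_of_gt (hg0 x))]
      field_simp
    rw [heq, integral_div, integral_sub (hg1 α hα) (hfg α hα)]
  -- J → 1
  have hJ1 : Tendsto (fun α : ℝ => ∫ x, f x ^ α * g x ∂μ) l (nhds 1) := by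
    rw [← hgint]
    refine tendsto_integral_filter_of_dominated_convergence
      (fun x => g x + g x * f x) ?_ ?_ (hginteg.add hgf) ?_
    · filter_upwards [self_mem_nhdsWithin] with α _
      have hm : Measurable (fun x => f x ^ α) := by
        have : (fun x => f x ^ α) = fun x => Real.exp (Real.log (f x) * α) :=
          funext fun x => Real.rpow_def_of_pos (hf0 x) α
        rw [this]
        exact (hf.log.mul_const α).exp
      exact (hm.mul hg).aestronglyMeasurable
    · filter_upwards [Ioc_mem_nhdsGT (zero_lt_one : (0:ℝ) < 1)] with α hα
      refine Filter.Eventually.of_forall fun x => ?_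
      have h1 : f x ^ α ≤ 1 + f x := by
        rcases le_or_gt (f x) 1 with hle | hlt
        · have := Real.rpow_le_one (hf0 x).le hle hα.1.le
          linarith [(hf0 x).le]
        · have := Real.rpow_le_rpow_of_exponent_le hlt.le hα.2
          rw [Real.rpow_one] at this
          linarith
      rw [Real.norm_eq_abs,
        abs_of_nonneg (mul_nonneg (Real.rpow_nonneg (hf0 x).le α) (hg0 x).le)]
      nlinarith [hg0 x, Real.rpow_nonneg (hf0 x).le α]
    · refine Filter.Eventually.of_forall fun x => ?_
      have hc : Tendsto (fun α : ℝ => Real.exp (Real.log (f x) * α)) (nhds 0)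
          (nhds 1) := by
        have : Continuous (fun α : ℝ => Real.exp (Real.log (f x) * α)) :=
          (continuous_const.mul continuous_id).rexp
        simpa using this.tendsto 0
      have hc2 := (hc.mono_left (show l ≤ nhds (0:ℝ) from nhdsWithin_le_nhds)).mul_const (g x)
      rw [one_mul] at hc2
      refine hc2.congr fun α => ?_
      rw [Real.rpow_def_of_pos (hf0 x)]
  -- F → 1
  have hF1 : Tendsto (fun α : ℝ => ∫ x, f x ^ (α + 1) ∂μ) l (nhds 1) := by
    suffices h : Tendsto (fun α : ℝ => ∫ x, f x ^ (α + 1) ∂μ) l (nhds (∫ x, f x ∂μ)) by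
      rwa [hfint] at h
    refine tendsto_integral_filter_of_dominated_convergence
      (fun x => f x + f x * f x) ?_ ?_ (hfinteg.add hf2) ?_
    · filter_upwards [self_mem_nhdsWithin] with α _
      have hm : Measurable (fun x => f x ^ (α + 1)) := by
        have : (fun x => f x ^ (α + 1)) = fun x => Real.exp (Real.log (f x) * (α + 1)) :=
          funext fun x => Real.rpow_def_of_pos (hf0 x) (α + 1)
        rw [this]
        exact (hf.log.mul_const (α + 1)).exp
      exact hm.aestronglyMeasurable
    · filter_upwards [Ioc_mem_nhdsGT (zero_lt_one : (0:ℝ) < 1)] with α hα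
      refine Filter.Eventually.of_forall fun x => ?_
      have he : f x ^ (α + 1) = f x ^ α * f x := Real.rpow_add_one (ne_of_gt (hf0 x)) α
      have h1 : f x ^ α ≤ 1 + f x := by
        rcases le_or_gt (f x) 1 with hle | hlt
        · have := Real.rpow_le_one (hf0 x).le hle hα.1.le
          linarith [(hf0 x).le]
        · have := Real.rpow_le_rpow_of_exponent_le hlt.le hα.2
          rw [Real.rpow_one] at this
          linarith
      rw [Real.norm_eq_abs, he,
        abs_of_nonneg (mul_nonneg (Real.rpow_nonneg (hf0 x).le α) (hf0 x).le)]
      nlinarith [hf0 x, Real.rpow_nonneg (hf0 x).le α]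
    · refine Filter.Eventually.of_forall fun x => ?_
      have hc : Tendsto (fun α : ℝ => Real.exp (Real.log (f x) * (α + 1))) (nhds 0)
          (nhds (f x)) := by
        have hcont : Continuous (fun α : ℝ => Real.exp (Real.log (f x) * (α + 1))) :=
          (continuous_const.mul (continuous_id.add continuous_const)).rexp
        have := hcont.tendsto 0
        simpa [Real.exp_log (hf0 x)] using this
      refine (hc.mono_left (show l ≤ nhds (0:ℝ) from nhdsWithin_le_nhds)).congr fun α => ?_
      rw [Real.rpow_def_of_pos (hf0 x)]
  -- ratio u = I/J - 1
  set I : ℝ → ℝ := fun α => ∫ x, g x ^ (α + 1) ∂μ with hIdef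
  set J : ℝ → ℝ := fun α => ∫ x, f x ^ α * g x ∂μ with hJdef
  have hJpos : ∀ α ∈ Set.Ioi (0:ℝ), 0 < J α := fun α hα => hfgpos α hα
  have hIpos : ∀ α ∈ Set.Ioi (0:ℝ), 0 < I α := fun α hα => hg1pos α hα
  have huα : Tendsto (fun α : ℝ => (I α / J α - 1) / α) l (nhds KL) := by
    have h := hDelta.div hJ1 one_ne_zero
    rw [div_one] at h
    refine h.congr' ?_
    filter_upwards [self_mem_nhdsWithin] with α (hα : α ∈ Set.Ioi (0:ℝ))
    have hα0 : (α:ℝ) ≠ 0 := ne_of_gt hα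
    have hJα : J α ≠ 0 := ne_of_gt (hJpos α hα)
    simp only [Pi.div_apply]
    rw [hIJ α hα, div_div, div_sub_one hJα, div_div, mul_comm α (J α)]
  have hu0 : Tendsto (fun α : ℝ => I α / J α - 1) l (nhds 0) := by
    have hid : Tendsto (fun α : ℝ => α) l (nhds 0) :=
      tendsto_id.mono_left (show l ≤ nhds (0:ℝ) from nhdsWithin_le_nhds)
    have := hid.mul huα
    rw [zero_mul] at this
    refine this.congr' ?_
    filter_upwards [self_mem_nhdsWithin] with α (hα : α ∈ Set.Ioi (0:ℝ))
    have hα0 : (α:ℝ) ≠ 0 := ne_of_gt hα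
    field_simp
  have hV : Tendsto (fun α : ℝ => V (I α / J α - 1)) l (nhds 1) := V_tendsto.comp hu0
  have hthird : Tendsto (fun α : ℝ => (1 / α) * (Real.log (I α) - Real.log (J α))) l
      (nhds KL) := by
    have h := huα.mul hV
    rw [mul_one] at h
    refine h.congr' ?_
    filter_upwards [self_mem_nhdsWithin] with α (hα : α ∈ Set.Ioi (0:ℝ))
    have hα0 : (α:ℝ) ≠ 0 := ne_of_gt hα
    have hJα : 0 < J α := hJpos α hα
    have hIα : 0 < I α := hIpos α hα
    have hgt : (-1:ℝ) < I α / J α - 1 := by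
      have : 0 < I α / J α := div_pos hIα hJα
      linarith
    have hlog : Real.log (I α) - Real.log (J α) = Real.log (1 + (I α / J α - 1)) := by
      rw [show (1:ℝ) + (I α / J α - 1) = I α / J α by ring,
        Real.log_div (ne_of_gt hIα) (ne_of_gt hJα)]
    rw [eq_comm, hlog, log_one_add_eq hgt]
    ring
  -- log F → 0 and log J → 0
  have hlogF : Tendsto (fun α : ℝ => Real.log (∫ x, f x ^ (α + 1) ∂μ)) l (nhds 0) := by
    have := (Real.continuousAt_log one_ne_zero).tendsto.comp hF1
    simpa [Function.comp_def, Real.log_one] using this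
  have hlogJ : Tendsto (fun α : ℝ => Real.log (J α)) l (nhds 0) := by
    have := (Real.continuousAt_log one_ne_zero).tendsto.comp hJ1
    simpa [Function.comp_def, Real.log_one] using this
  -- assemble
  have hfinal := (hlogF.sub hlogJ).add hthird
  rw [sub_zero, zero_add] at hfinal
  refine hfinal.congr' ?_
  filter_upwards [self_mem_nhdsWithin] with α (hα : α ∈ Set.Ioi (0:ℝ))
  have hα0 : (α:ℝ) ≠ 0 := ne_of_gt hα
  simp only [hIdef, hJdef]
  field_simp
  ring
end

section
/- For fixed positive densities f, g, the DPD tends to the Kullback–Leibler divergence as α → 0: lim_{α→0⁺} ∫[f^{α+1} − (1 + 1/α) f^α g + (1/α) g^{α+1}] dμ = ∫ g log(g/f) dμ. -/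
open MeasureTheory Filter Real

noncomputable def S (α r : ℝ) : ℝ := (Real.exp (α * r) - 1)/α - r

lemma hasDerivAt_S {α : ℝ} (hα : α ≠ 0) (u : ℝ) :
    HasDerivAt (S α) (Real.exp (α * u) - 1) u := by
  have h1 : HasDerivAt (fun r : ℝ => α * r) α u := by
    simpa using (hasDerivAt_id u).const_mul α
  have h3 := ((h1.exp.sub_const 1).div_const α).sub (hasDerivAt_id u)
  rw [mul_div_cancel_right₀ _ hα] at h3
  exact h3

lemma S_zero (α : ℝ) : S α 0 = 0 := by simp [S]

lemma aux_S {α : ℝ} (hα : 0 < α) {x y : ℝ} (hxy : y < x) :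
    |S α x - S α y| ≤ |x - y| * max |Real.exp (α*x) - 1| |Real.exp (α*y) - 1| := by
  obtain ⟨c, hc, hce⟩ := exists_hasDerivAt_eq_slope (S α) (fun u => Real.exp (α*u) - 1) hxy
    (fun u _ => (hasDerivAt_S hα.ne' u).continuousAt.continuousWithinAt)
    (fun u _ => hasDerivAt_S hα.ne' u)
  have hne : x - y ≠ 0 := sub_ne_zero.mpr hxy.ne'
  have : S α x - S α y = (x - y) * (Real.exp (α*c) - 1) := by
    rw [hce]; field_simp
  rw [this, abs_mul]
  gcongr
  have h1 : Real.exp (α*y) - 1 ≤ Real.exp (α*c) - 1 := by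
    have := Real.exp_le_exp.mpr (mul_le_mul_of_nonneg_left hc.1.le hα.le)
    linarith
  have h2 : Real.exp (α*c) - 1 ≤ Real.exp (α*x) - 1 := by
    have := Real.exp_le_exp.mpr (mul_le_mul_of_nonneg_left hc.2.le hα.le)
    linarith
  exact (abs_le_max_abs_abs h1 h2).trans (by rw [max_comm])

lemma abs_S_sub_S_le {α : ℝ} (hα : 0 < α) (x y : ℝ) :
    |S α x - S α y| ≤ |x - y| * max |Real.exp (α*x) - 1| |Real.exp (α*y) - 1| := by
  rcases lt_trichotomy x y with h | h | h
  · rw [abs_sub_comm, abs_sub_comm x y, max_comm]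
    exact aux_S hα h
  · simp [h]
  · exact aux_S hα h

lemma exp_sub_one_le {v : ℝ} (hv : 0 ≤ v) : Real.exp v - 1 ≤ v * Real.exp v := by
  have h := Real.add_one_le_exp (-v)
  have hp := Real.exp_pos v
  have hn : Real.exp (-v) * Real.exp v = 1 := by
    rw [← Real.exp_add]; simp
  nlinarith

lemma sq_le_four_exp {t : ℝ} (ht : 0 ≤ t) : t^2 ≤ 4 * Real.exp t := by
  have h := Real.add_one_le_exp (t/2)
  have : Real.exp (t/2) * Real.exp (t/2) = Real.exp t := by
    rw [← Real.exp_add]; ring_nf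
  nlinarith

lemma S_pos_bound {α x y : ℝ} (hα : 0 < α) (hα1 : α ≤ 1) (hx : 0 ≤ x) (hy : 0 ≤ y) :
    |S α x - S α y| ≤ α * (4 * Real.exp (2*(x+y))) := by
  have key := abs_S_sub_S_le hα x y
  have hb : ∀ r : ℝ, 0 ≤ r → r ≤ x + y →
      |Real.exp (α*r) - 1| ≤ α * ((x+y) * Real.exp (x+y)) := by
    intro r hr hrxy
    have h1 : (1:ℝ) ≤ Real.exp (α*r) := Real.one_le_exp (mul_nonneg hα.le hr)
    rw [abs_of_nonneg (by linarith)]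
    have h2 : Real.exp (α*r) - 1 ≤ (α*r) * Real.exp (α*r) :=
      exp_sub_one_le (mul_nonneg hα.le hr)
    have h3 : Real.exp (α*r) ≤ Real.exp (x+y) :=
      Real.exp_le_exp.mpr (by nlinarith)
    have h4 : α * r ≤ α * (x+y) := by nlinarith
    have h5 : (α*r) * Real.exp (α*r) ≤ (α*(x+y)) * Real.exp (x+y) := by
      apply mul_le_mul h4 h3 (Real.exp_pos _).le (by nlinarith)
    calc Real.exp (α*r) - 1 ≤ (α*r) * Real.exp (α*r) := h2
      _ ≤ (α*(x+y)) * Real.exp (x+y) := h5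
      _ = α * ((x+y) * Real.exp (x+y)) := by ring
  have hmax : max |Real.exp (α*x) - 1| |Real.exp (α*y) - 1|
      ≤ α * ((x+y) * Real.exp (x+y)) :=
    max_le (hb x hx (by linarith)) (hb y hy (by linarith))
  have habs : |x - y| ≤ x + y := abs_le.mpr ⟨by linarith, by linarith⟩
  have hsq : (x+y)^2 ≤ 4 * Real.exp (x+y) := sq_le_four_exp (by linarith)
  have hee : Real.exp (x+y) * Real.exp (x+y) = Real.exp (2*(x+y)) := by
    rw [← Real.exp_add]; ring_nf
  have hmaxnn : (0:ℝ) ≤ max |Real.exp (α*x) - 1| |Real.exp (α*y) - 1| :=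
    le_max_of_le_left (abs_nonneg _)
  have step : |x - y| * max |Real.exp (α*x) - 1| |Real.exp (α*y) - 1|
      ≤ (x+y) * (α * ((x+y) * Real.exp (x+y))) :=
    mul_le_mul habs hmax hmaxnn (by linarith)
  have hep := Real.exp_pos (x+y)
  calc |S α x - S α y| ≤ (x+y) * (α * ((x+y) * Real.exp (x+y))) := key.trans step
    _ = α * ((x+y)^2 * Real.exp (x+y)) := by ring
    _ ≤ α * (4 * Real.exp (2*(x+y))) := by
        apply mul_le_mul_of_nonneg_left _ hα.le
        nlinarith

lemma S_split {α : ℝ} (hα : α ≠ 0) (r : ℝ) :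
    S α r = S α (min r 0) + S α (max r 0) := by
  rcases le_total r 0 with h | h
  · rw [min_eq_left h, max_eq_right h, S_zero, add_zero]
  · rw [min_eq_right h, max_eq_left h, S_zero, zero_add]

lemma S_neg_bound {α x y : ℝ} (hα : 0 < α) (hx : x ≤ 0) (hy : y ≤ 0) :
    |S α x - S α y| ≤ |x - y| := by
  refine (abs_S_sub_S_le hα x y).trans ?_
  have hb : ∀ r : ℝ, r ≤ 0 → |Real.exp (α*r) - 1| ≤ 1 := by
    intro r hr
    have h1 : Real.exp (α*r) ≤ 1 := Real.exp_le_one_iff.mpr (by nlinarith)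
    have h2 := Real.exp_pos (α*r)
    rw [abs_le]; constructor <;> linarith
  calc |x - y| * max |Real.exp (α*x) - 1| |Real.exp (α*y) - 1|
      ≤ |x - y| * 1 := by
        apply mul_le_mul_of_nonneg_left (max_le (hb x hx) (hb y hy)) (abs_nonneg _)
    _ = |x - y| := mul_one _

lemma S_tendsto (r : ℝ) :
    Tendsto (fun α : ℝ => S α r) (nhdsWithin 0 (Set.Ioi 0)) (nhds 0) := by
  have hd : HasDerivAt (fun α : ℝ => Real.exp (α * r)) r 0 := by
    simpa using (hasDerivAt_mul_const r (x := (0:ℝ))).exp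
  have ht := hasDerivAt_iff_tendsto_slope.mp hd
  have ht2 : Tendsto (slope (fun α : ℝ => Real.exp (α * r)) 0)
      (nhdsWithin 0 (Set.Ioi 0)) (nhds r) :=
    ht.mono_left (nhdsWithin_mono 0 (fun x hx => ne_of_gt hx))
  have h3 := ht2.sub_const r
  rw [sub_self] at h3
  refine h3.congr' ?_
  filter_upwards [self_mem_nhdsWithin] with α hα
  have hne : α ≠ (0:ℝ) := ne_of_gt hα
  simp [slope_def_field, S]
lemma min0_lip (a b : ℝ) : |min a 0 - min b 0| ≤ |a - b| :=
  (abs_min_sub_min_le_max a 0 b 0).trans (by simp)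

lemma pointwise_id {α F G : ℝ} (hα : α ≠ 0) (hF : 0 < F) (hG : 0 < G) :
    F ^ (α+1) - (1+1/α) * F^α * G + (1/α) * G^(α+1)
    = (F^(α+1) - F^α * G) + G * Real.log (G/F)
      + (G * (S α (min (Real.log G) 0) - S α (min (Real.log F) 0))
         + G * (S α (max (Real.log G) 0) - S α (max (Real.log F) 0))) := by
  have h1 := S_split hα (Real.log G)
  have h2 := S_split hα (Real.log F)
  have key : (G * (S α (min (Real.log G) 0) - S α (min (Real.log F) 0))
         + G * (S α (max (Real.log G) 0) - S α (max (Real.log F) 0)))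
      = G * (S α (Real.log G) - S α (Real.log F)) := by rw [h1, h2]; ring
  rw [key, Real.log_div hG.ne' hF.ne']
  simp only [S]
  rw [Real.rpow_add hF α 1, Real.rpow_add hG α 1, Real.rpow_one, Real.rpow_one,
    Real.rpow_def_of_pos hF, Real.rpow_def_of_pos hG]
  field_simp
  ring

lemma exp_max_log {F : ℝ} (hF : 0 < F) : Real.exp (max (Real.log F) 0) = max F 1 := by
  rcases le_total (Real.log F) 0 with h | h
  · rw [max_eq_right h, Real.exp_zero, max_eq_right]
    exact (Real.log_nonpos_iff hF.le).mp h
  · rw [max_eq_left h, Real.exp_log hF, max_eq_left]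
    exact (Real.log_nonneg_iff hF).mp h

lemma pos_piece_bound {α F G : ℝ} (hα : 0 < α) (hα1 : α ≤ 1) (hF : 0 < F) (hG : 0 < G) :
    G * |S α (max (Real.log G) 0) - S α (max (Real.log F) 0)|
    ≤ α * (4*G + (4*(F^(2:ℝ)*G) + (4*(G^((2:ℝ)+1)) + (2*(F^(4:ℝ)*G) + 2*(G^((4:ℝ)+1)))))) := by
  have h1 := S_pos_bound hα hα1 (le_max_right (Real.log G) 0) (le_max_right (Real.log F) 0)
  have hE : Real.exp (2*(max (Real.log G) 0 + max (Real.log F) 0))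
      = (max G 1)^2 * (max F 1)^2 := by
    rw [show 2*(max (Real.log G) 0 + max (Real.log F) 0)
        = (max (Real.log G) 0 + max (Real.log G) 0) + (max (Real.log F) 0 + max (Real.log F) 0) by ring,
      Real.exp_add, Real.exp_add, Real.exp_add, exp_max_log hF, exp_max_log hG]
    ring
  have e2 : F^(2:ℝ) = F*F := by
    rw [show (2:ℝ) = ((2:ℕ):ℝ) by norm_num, Real.rpow_natCast]; ring
  have e3 : G^((2:ℝ)+1) = G*G*G := by
    rw [show (2:ℝ)+1 = ((3:ℕ):ℝ) by norm_num, Real.rpow_natCast]; ring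
  have e4 : F^(4:ℝ) = F*F*(F*F) := by
    rw [show (4:ℝ) = ((4:ℕ):ℝ) by norm_num, Real.rpow_natCast]; ring
  have e5 : G^((4:ℝ)+1) = G*G*(G*G)*G := by
    rw [show (4:ℝ)+1 = ((5:ℕ):ℝ) by norm_num, Real.rpow_natCast]; ring
  rw [e2, e3, e4, e5]
  have hu2 : (max F 1)^2 ≤ 1 + F*F := by
    rcases max_cases F 1 with ⟨he, _⟩ | ⟨he, _⟩ <;> rw [he] <;> nlinarith
  have hv2 : (max G 1)^2 ≤ 1 + G*G := by
    rcases max_cases G 1 with ⟨he, _⟩ | ⟨he, _⟩ <;> rw [he] <;> nlinarith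
  have step : G * |S α (max (Real.log G) 0) - S α (max (Real.log F) 0)|
      ≤ G * (α * (4 * ((max G 1)^2 * (max F 1)^2))) := by
    rw [← hE]
    exact mul_le_mul_of_nonneg_left h1 hG.le
  refine step.trans ?_
  have h4 : G * (4 * ((max G 1)^2 * (max F 1)^2)) ≤
      4*G + (4*(F*F*G) + (4*(G*G*G) + (2*(F*F*(F*F)*G) + 2*(G*G*(G*G)*G)))) := by
    have hFn := hF.le
    have hGn := hG.le
    have key : (max G 1)^2 * (max F 1)^2 ≤ (1+G*G)*(1+F*F) := by
      have := mul_le_mul hv2 hu2 (sq_nonneg _) (by nlinarith)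
      linarith
    have key2 : G * (4 * ((max G 1)^2 * (max F 1)^2)) ≤ G * (4 * ((1+G*G)*(1+F*F))) := by
      apply mul_le_mul_of_nonneg_left _ hGn
      nlinarith
    refine key2.trans ?_
    nlinarith [mul_nonneg hGn (sq_nonneg (F*F - G*G))]
  calc G * (α * (4 * ((max G 1)^2 * (max F 1)^2)))
      = α * (G * (4 * ((max G 1)^2 * (max F 1)^2))) := by ring
    _ ≤ α * (4*G + (4*(F*F*G) + (4*(G*G*G) + (2*(F*F*(F*F)*G) + 2*(G*G*(G*G)*G))))) := by
        apply mul_le_mul_of_nonneg_left h4 hα.le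

lemma continuous_S (α : ℝ) : Continuous (S α) := by
  unfold S; fun_prop

lemma measurable_rpow_const' {f : ℝ → ℝ} (hf : Measurable f) (hf0 : ∀ x, 0 < f x) (c : ℝ) :
    Measurable (fun x => f x ^ c) := by
  have h : (fun x => f x ^ c) = fun x => Real.exp (Real.log (f x) * c) := by
    funext x; rw [Real.rpow_def_of_pos (hf0 x)]
  rw [h]
  exact Real.measurable_exp.comp (hf.log.mul_const c)

/-- The DPD tends to the Kullback–Leibler divergence as `α → 0⁺`. -/
theorem dpd_tendsto_kl
    {μ : Measure ℝ} {f g : ℝ → ℝ}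
    (hf : Measurable f) (hg : Measurable g)
    (hf0 : ∀ x, 0 < f x) (hg0 : ∀ x, 0 < g x)
    (hfint : ∫ x, f x ∂μ = 1) (hgint : ∫ x, g x ∂μ = 1)
    (hfg : ∀ α > (0 : ℝ), Integrable (fun x => f x ^ α * g x) μ)
    (hf1 : ∀ α > (0 : ℝ), Integrable (fun x => f x ^ (α + 1)) μ)
    (hg1 : ∀ α > (0 : ℝ), Integrable (fun x => g x ^ (α + 1)) μ)
    (hkl : Integrable (fun x => g x * Real.log (g x / f x)) μ) :
    Tendsto (fun α : ℝ =>
        ∫ x, (f x ^ (α + 1) - (1 + 1 / α) * f x ^ α * g x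
          + (1 / α) * g x ^ (α + 1)) ∂μ)
      (nhdsWithin 0 (Set.Ioi 0))
      (nhds (∫ x, g x * Real.log (g x / f x) ∂μ)) := by
  have hfi : Integrable f μ := by
    by_contra h
    rw [integral_undef h] at hfint; exact one_ne_zero hfint.symm
  have hgi : Integrable g μ := by
    by_contra h
    rw [integral_undef h] at hgint; exact one_ne_zero hgint.symm
  have hev : ∀ᶠ α in nhdsWithin (0:ℝ) (Set.Ioi 0), α ∈ Set.Ioc (0:ℝ) 1 :=
    Ioc_mem_nhdsGT_of_mem ⟨le_refl 0, zero_lt_one⟩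
  -- integrability of the Neg part
  have hintN : ∀ α : ℝ, 0 < α → Integrable
      (fun x => g x * (S α (min (Real.log (g x)) 0) - S α (min (Real.log (f x)) 0))) μ := by
    intro α h0
    apply Integrable.mono' hkl.abs
    · exact (hg.mul ((((continuous_S α).measurable.comp (hg.log.min measurable_const)).sub
        ((continuous_S α).measurable.comp (hf.log.min measurable_const))))).aestronglyMeasurable
    · apply ae_of_all
      intro x
      rw [Real.norm_eq_abs, abs_mul, abs_of_pos (hg0 x), abs_mul, abs_of_pos (hg0 x),
        Real.log_div (hg0 x).ne' (hf0 x).ne']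
      apply mul_le_mul_of_nonneg_left _ (hg0 x).le
      exact (S_neg_bound h0 (min_le_right (Real.log (g x)) 0)
        (min_le_right (Real.log (f x)) 0)).trans (min0_lip _ _)
  -- the dominating function for the Pos part
  have hKi : Integrable (fun x => 4*g x + (4*(f x^(2:ℝ)*g x) + (4*(g x^((2:ℝ)+1))
      + (2*(f x^(4:ℝ)*g x) + 2*(g x^((4:ℝ)+1)))))) μ := by
    exact (hgi.const_mul 4).add (((hfg 2 (by norm_num)).const_mul 4).add
      (((hg1 2 (by norm_num)).const_mul 4).add
        (((hfg 4 (by norm_num)).const_mul 2).add ((hg1 4 (by norm_num)).const_mul 2))))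
  have hPosb : ∀ α ∈ Set.Ioc (0:ℝ) 1, ∀ x,
      ‖g x * (S α (max (Real.log (g x)) 0) - S α (max (Real.log (f x)) 0))‖
      ≤ α * (4*g x + (4*(f x^(2:ℝ)*g x) + (4*(g x^((2:ℝ)+1))
          + (2*(f x^(4:ℝ)*g x) + 2*(g x^((4:ℝ)+1)))))) := by
    intro α hα x
    rw [Real.norm_eq_abs, abs_mul, abs_of_pos (hg0 x)]
    exact pos_piece_bound hα.1 hα.2 (hf0 x) (hg0 x)
  have hintP : ∀ α ∈ Set.Ioc (0:ℝ) 1, Integrable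
      (fun x => g x * (S α (max (Real.log (g x)) 0) - S α (max (Real.log (f x)) 0))) μ := by
    intro α hα
    apply Integrable.mono' (hKi.const_mul α)
    · exact (hg.mul ((((continuous_S α).measurable.comp (hg.log.max measurable_const)).sub
        ((continuous_S α).measurable.comp (hf.log.max measurable_const))))).aestronglyMeasurable
    · exact ae_of_all _ (hPosb α hα)
  -- limit of ∫ f^(α+1)
  have hI1 : Tendsto (fun α : ℝ => ∫ x, f x ^ (α+1) ∂μ) (nhdsWithin (0:ℝ) (Set.Ioi 0)) (nhds 1) := by
    have key : Tendsto (fun α : ℝ => ∫ x, f x ^ (α+1) ∂μ) (nhdsWithin (0:ℝ) (Set.Ioi 0))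
        (nhds (∫ x, f x ∂μ)) := by
      apply tendsto_integral_filter_of_dominated_convergence (fun x => f x + f x ^ ((1:ℝ)+1))
      · exact Eventually.of_forall fun α => (measurable_rpow_const' hf hf0 (α+1)).aestronglyMeasurable
      · filter_upwards [hev] with α hα
        apply ae_of_all
        intro x
        rw [Real.norm_eq_abs, abs_of_pos (Real.rpow_pos_of_pos (hf0 x) _)]
        rcases le_total (f x) 1 with h | h
        · have h1 : f x ^ (α+1) ≤ f x ^ (1:ℝ) :=
            Real.rpow_le_rpow_of_exponent_ge (hf0 x) h (by linarith [hα.1])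
          rw [Real.rpow_one] at h1
          have h2 : (0:ℝ) ≤ f x ^ ((1:ℝ)+1) := (Real.rpow_pos_of_pos (hf0 x) _).le
          linarith
        · have h1 : f x ^ (α+1) ≤ f x ^ ((1:ℝ)+1) :=
            Real.rpow_le_rpow_of_exponent_le h (by linarith [hα.2])
          linarith [(hf0 x).le]
      · exact hfi.add (hf1 1 one_pos)
      · apply ae_of_all
        intro x
        have hrw : ∀ β : ℝ, f x ^ (β+1) = Real.exp (Real.log (f x) * (β+1)) :=
          fun β => Real.rpow_def_of_pos (hf0 x) _
        have base : Tendsto (fun β : ℝ => Real.exp (Real.log (f x) * (β+1))) (nhds 0)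
            (nhds (Real.exp (Real.log (f x) * (0+1)))) := by
          apply Continuous.tendsto
          fun_prop
        rw [show Real.exp (Real.log (f x) * (0+1)) = f x by
          rw [zero_add, mul_one, Real.exp_log (hf0 x)]] at base
        exact (base.mono_left nhdsWithin_le_nhds).congr fun β => (hrw β).symm
    rw [hfint] at key
    exact key

  -- limit of ∫ f^α g
  have hfg1 : Integrable (fun x => f x * g x) μ := by
    have := hfg 1 one_pos
    simpa [Real.rpow_one] using this
  have hI2 : Tendsto (fun α : ℝ => ∫ x, f x ^ α * g x ∂μ) (nhdsWithin (0:ℝ) (Set.Ioi 0)) (nhds 1) := by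
    have key : Tendsto (fun α : ℝ => ∫ x, f x ^ α * g x ∂μ) (nhdsWithin (0:ℝ) (Set.Ioi 0))
        (nhds (∫ x, g x ∂μ)) := by
      apply tendsto_integral_filter_of_dominated_convergence (fun x => g x + f x * g x)
      · exact Eventually.of_forall fun α =>
          ((measurable_rpow_const' hf hf0 α).mul hg).aestronglyMeasurable
      · filter_upwards [hev] with α hα
        apply ae_of_all
        intro x
        rw [Real.norm_eq_abs, abs_of_pos (mul_pos (Real.rpow_pos_of_pos (hf0 x) _) (hg0 x))]
        rcases le_total (f x) 1 with h | h
        · have h1 : f x ^ α ≤ 1 := Real.rpow_le_one (hf0 x).le h hα.1.le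
          have h2 := mul_le_mul_of_nonneg_right h1 (hg0 x).le
          have h3 := mul_pos (hf0 x) (hg0 x)
          linarith
        · have h1 : f x ^ α ≤ f x ^ (1:ℝ) := Real.rpow_le_rpow_of_exponent_le h hα.2
          rw [Real.rpow_one] at h1
          have h2 := mul_le_mul_of_nonneg_right h1 (hg0 x).le
          linarith [(hg0 x).le]
      · exact hgi.add hfg1
      · apply ae_of_all
        intro x
        have hrw : ∀ β : ℝ, f x ^ β * g x = Real.exp (Real.log (f x) * β) * g x :=
          fun β => by rw [Real.rpow_def_of_pos (hf0 x)]
        have base : Tendsto (fun β : ℝ => Real.exp (Real.log (f x) * β) * g x) (nhds 0)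
            (nhds (Real.exp (Real.log (f x) * 0) * g x)) := by
          apply Continuous.tendsto
          fun_prop
        rw [show Real.exp (Real.log (f x) * 0) * g x = g x by
          rw [mul_zero, Real.exp_zero, one_mul]] at base
        exact (base.mono_left nhdsWithin_le_nhds).congr fun β => (hrw β).symm
    rw [hgint] at key
    exact key

  -- limit of ∫ Neg
  have hIN : Tendsto (fun α : ℝ => ∫ x, g x * (S α (min (Real.log (g x)) 0)
      - S α (min (Real.log (f x)) 0)) ∂μ) (nhdsWithin (0:ℝ) (Set.Ioi 0)) (nhds 0) := by
    have key : Tendsto (fun α : ℝ => ∫ x, g x * (S α (min (Real.log (g x)) 0)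
        - S α (min (Real.log (f x)) 0)) ∂μ) (nhdsWithin (0:ℝ) (Set.Ioi 0))
        (nhds (∫ _x, (0:ℝ) ∂μ)) := by
      apply tendsto_integral_filter_of_dominated_convergence
        (fun x => |g x * Real.log (g x / f x)|)
      · exact Eventually.of_forall fun α =>
          (hg.mul ((((continuous_S α).measurable.comp (hg.log.min measurable_const)).sub
            ((continuous_S α).measurable.comp (hf.log.min measurable_const))))).aestronglyMeasurable
      · filter_upwards [self_mem_nhdsWithin] with α hα
        apply ae_of_all
        intro x
        rw [Real.norm_eq_abs, abs_mul, abs_of_pos (hg0 x), abs_mul, abs_of_pos (hg0 x),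
          Real.log_div (hg0 x).ne' (hf0 x).ne']
        apply mul_le_mul_of_nonneg_left _ (hg0 x).le
        exact (S_neg_bound hα (min_le_right (Real.log (g x)) 0)
          (min_le_right (Real.log (f x)) 0)).trans (min0_lip _ _)
      · exact hkl.abs
      · apply ae_of_all
        intro x
        have := ((S_tendsto (min (Real.log (g x)) 0)).sub
          (S_tendsto (min (Real.log (f x)) 0))).const_mul (g x)
        simpa using this
    rw [integral_zero] at key
    exact key

  -- limit of ∫ Pos
  have hIP : Tendsto (fun α : ℝ => ∫ x, g x * (S α (max (Real.log (g x)) 0)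
      - S α (max (Real.log (f x)) 0)) ∂μ) (nhdsWithin (0:ℝ) (Set.Ioi 0)) (nhds 0) := by
    apply tendsto_zero_iff_norm_tendsto_zero.mpr
    have hlin : Tendsto (fun α : ℝ => α * ∫ x, (4*g x + (4*(f x^(2:ℝ)*g x) + (4*(g x^((2:ℝ)+1))
        + (2*(f x^(4:ℝ)*g x) + 2*(g x^((4:ℝ)+1)))))) ∂μ) (nhdsWithin (0:ℝ) (Set.Ioi 0)) (nhds 0) := by
      have base := (continuous_id.mul (continuous_const
        (y := ∫ x, (4*g x + (4*(f x^(2:ℝ)*g x) + (4*(g x^((2:ℝ)+1))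
        + (2*(f x^(4:ℝ)*g x) + 2*(g x^((4:ℝ)+1)))))) ∂μ))).tendsto 0
      simpa [Pi.mul_def] using base.mono_left nhdsWithin_le_nhds
    apply squeeze_zero' (Eventually.of_forall fun α => norm_nonneg _) _ hlin
    filter_upwards [hev] with α hα
    calc ‖∫ x, g x * (S α (max (Real.log (g x)) 0) - S α (max (Real.log (f x)) 0)) ∂μ‖
        ≤ ∫ x, ‖g x * (S α (max (Real.log (g x)) 0) - S α (max (Real.log (f x)) 0))‖ ∂μ :=
          norm_integral_le_integral_norm _
      _ ≤ ∫ x, α * (4*g x + (4*(f x^(2:ℝ)*g x) + (4*(g x^((2:ℝ)+1))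
          + (2*(f x^(4:ℝ)*g x) + 2*(g x^((4:ℝ)+1)))))) ∂μ :=
          integral_mono ((hintP α hα).norm) (hKi.const_mul α) (fun x => hPosb α hα x)
      _ = α * ∫ x, (4*g x + (4*(f x^(2:ℝ)*g x) + (4*(g x^((2:ℝ)+1))
          + (2*(f x^(4:ℝ)*g x) + 2*(g x^((4:ℝ)+1)))))) ∂μ := integral_const_mul α _

  -- splitting of the integral
  have hsplit : ∀ᶠ α in nhdsWithin (0:ℝ) (Set.Ioi 0),
      (∫ x, (f x ^ (α + 1) - (1 + 1 / α) * f x ^ α * g x + (1 / α) * g x ^ (α + 1)) ∂μ)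
      = (∫ x, f x ^ (α+1) ∂μ) - (∫ x, f x ^ α * g x ∂μ)
        + (∫ x, g x * Real.log (g x / f x) ∂μ)
        + ((∫ x, g x * (S α (min (Real.log (g x)) 0) - S α (min (Real.log (f x)) 0)) ∂μ)
        + (∫ x, g x * (S α (max (Real.log (g x)) 0) - S α (max (Real.log (f x)) 0)) ∂μ)) := by
    filter_upwards [hev] with α hα
    have h0 : (0:ℝ) < α := hα.1
    have hid : (fun x => f x ^ (α + 1) - (1 + 1 / α) * f x ^ α * g x + (1 / α) * g x ^ (α + 1))
        = fun x => (f x ^ (α+1) - f x ^ α * g x) + g x * Real.log (g x / f x)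
          + ((g x * (S α (min (Real.log (g x)) 0) - S α (min (Real.log (f x)) 0)))
            + (g x * (S α (max (Real.log (g x)) 0) - S α (max (Real.log (f x)) 0)))) := by
      funext x
      exact pointwise_id h0.ne' (hf0 x) (hg0 x)
    rw [hid]
    have hT1 := hf1 α h0
    have hT2 := hfg α h0
    have hN := hintN α h0
    have hP := hintP α hα
    have hB : Integrable (fun x => f x ^ (α+1) - f x ^ α * g x) μ := hT1.sub hT2
    have hC : Integrable (fun x => f x ^ (α+1) - f x ^ α * g x
        + g x * Real.log (g x / f x)) μ := hB.add hkl
    have hD : Integrable (fun x => g x * (S α (min (Real.log (g x)) 0) - S α (min (Real.log (f x)) 0))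
        + g x * (S α (max (Real.log (g x)) 0) - S α (max (Real.log (f x)) 0))) μ := hN.add hP
    rw [integral_add hC hD, integral_add hB hkl, integral_add hN hP, integral_sub hT1 hT2]

  have H : Tendsto (fun α : ℝ => (∫ x, f x ^ (α+1) ∂μ) - (∫ x, f x ^ α * g x ∂μ)
        + (∫ x, g x * Real.log (g x / f x) ∂μ)
        + ((∫ x, g x * (S α (min (Real.log (g x)) 0) - S α (min (Real.log (f x)) 0)) ∂μ)
        + (∫ x, g x * (S α (max (Real.log (g x)) 0) - S α (max (Real.log (f x)) 0)) ∂μ)))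
      (nhdsWithin (0:ℝ) (Set.Ioi 0))
      (nhds (1 - 1 + (∫ x, g x * Real.log (g x / f x) ∂μ) + (0 + 0))) :=
    ((hI1.sub hI2).add tendsto_const_nhds).add (hIN.add hIP)
  rw [show (1:ℝ) - 1 + (∫ x, g x * Real.log (g x / f x) ∂μ) + (0 + 0)
      = ∫ x, g x * Real.log (g x / f x) ∂μ by ring] at H
  exact H.congr' (EventuallyEq.symm hsplit)
end
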